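/- arXiv:0908.2988 — 6 statements merged into one kernel-verified Lean document; each statement's English description precedes it below -/
import Mathlib

section
/- For every megamatroid rk on the ground set {1,…,d}, the base polyhedron Q(rk) is a nonempty subset of ℝ^d. -/
open scoped BigOperators

/-- A megamatroid on the ground set `{1,…,d}` (modeled as `Fin d`): a function from
subsets to `ℤ ∪ {∞}` with `rk ∅ = 0`, `rk univ` finite, and submodularity on finite values. -/
structure Megamatroid (d : ℕ) where
  rk : Finset (Fin d) → WithTop ℤ
  rk_empty : rk ∅ = 0
  rk_univ_ne_top : rk Finset.univ ≠ ⊤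
  submodular : ∀ A B : Finset (Fin d), rk A ≠ ⊤ → rk B ≠ ⊤ →
    rk (A ∪ B) ≠ ⊤ ∧ rk (A ∩ B) ≠ ⊤ ∧ rk (A ∪ B) + rk (A ∩ B) ≤ rk A + rk B

/-- The base polyhedron `Q(rk)` of a megamatroid: points `y ∈ ℝ^d` with
`∑ i, y i = rk(univ)` and `∑ i ∈ A, y i ≤ rk A` whenever `rk A` is finite. -/
def megaQ {d : ℕ} (M : Megamatroid d) : Set (Fin d → ℝ) :=
  {y | (∀ z : ℤ, M.rk Finset.univ = (z : WithTop ℤ) → ∑ i, y i = (z : ℝ)) ∧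
    ∀ A : Finset (Fin d), ∀ z : ℤ, M.rk A = (z : WithTop ℤ) → ∑ i ∈ A, y i ≤ (z : ℝ)}

namespace Megamatroid

variable {d : ℕ} (M : Megamatroid d)

/-- Integer value of the rank, with junk value 0 at `⊤`. -/
def f (A : Finset (Fin d)) : ℤ := WithTop.untopD 0 (M.rk A)

lemma f_eq {A : Finset (Fin d)} {z : ℤ} (h : M.rk A = (z : WithTop ℤ)) : M.f A = z := by
  simp [f, h]

lemma f_empty : M.f ∅ = 0 := by
  have : M.rk ∅ = ((0 : ℤ) : WithTop ℤ) := by simpa using M.rk_empty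
  simpa using M.f_eq this

lemma f_submod {A B : Finset (Fin d)} (hA : M.rk A ≠ ⊤) (hB : M.rk B ≠ ⊤) :
    M.rk (A ∪ B) ≠ ⊤ ∧ M.rk (A ∩ B) ≠ ⊤ ∧
      M.f (A ∪ B) + M.f (A ∩ B) ≤ M.f A + M.f B := by
  obtain ⟨hu, hi, hle⟩ := M.submodular A B hA hB
  obtain ⟨a, ha⟩ := WithTop.ne_top_iff_exists.mp hA
  obtain ⟨b, hb⟩ := WithTop.ne_top_iff_exists.mp hB
  obtain ⟨u, hu'⟩ := WithTop.ne_top_iff_exists.mp hu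
  obtain ⟨v, hv'⟩ := WithTop.ne_top_iff_exists.mp hi
  refine ⟨hu, hi, ?_⟩
  rw [M.f_eq ha.symm, M.f_eq hb.symm, M.f_eq hu'.symm, M.f_eq hv'.symm]
  rw [← ha, ← hb, ← hu', ← hv'] at hle
  exact_mod_cast hle

/-- A big penalty constant. -/
def bigM : ℤ :=
  max 0 (Finset.univ.sup' Finset.univ_nonempty fun B : Finset (Fin d) => -(M.f B))

lemma bigM_nonneg : 0 ≤ M.bigM := le_max_left _ _

lemma bigM_ge (B : Finset (Fin d)) : -(M.f B) ≤ M.bigM :=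
  le_trans (Finset.le_sup' (fun B : Finset (Fin d) => -(M.f B)) (Finset.mem_univ B)) (le_max_right _ _)

/-- The penalized cost. -/
def cost (A B : Finset (Fin d)) : ℤ := M.f B + M.bigM * ((B \ A).card : ℤ)

/-- Candidate supersets with finite rank. -/
def cand (A : Finset (Fin d)) : Finset (Finset (Fin d)) :=
  Finset.univ.filter fun B => A ⊆ B ∧ M.rk B ≠ ⊤

lemma mem_cand {A B : Finset (Fin d)} : B ∈ M.cand A ↔ A ⊆ B ∧ M.rk B ≠ ⊤ := by
  simp [cand]

lemma cand_nonempty (A : Finset (Fin d)) : (M.cand A).Nonempty :=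
  ⟨Finset.univ, M.mem_cand.mpr ⟨Finset.subset_univ _, M.rk_univ_ne_top⟩⟩

/-- The extended submodular function. -/
def g (A : Finset (Fin d)) : ℤ := (M.cand A).inf' (M.cand_nonempty A) (M.cost A)

lemma g_le {A B : Finset (Fin d)} (hAB : A ⊆ B) (hB : M.rk B ≠ ⊤) :
    M.g A ≤ M.cost A B :=
  Finset.inf'_le _ (M.mem_cand.mpr ⟨hAB, hB⟩)

lemma g_spec (A : Finset (Fin d)) :
    ∃ B, A ⊆ B ∧ M.rk B ≠ ⊤ ∧ M.g A = M.cost A B := by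
  obtain ⟨B, hB, heq⟩ := Finset.exists_mem_eq_inf' (M.cand_nonempty A) (M.cost A)
  exact ⟨B, (M.mem_cand.mp hB).1, (M.mem_cand.mp hB).2, heq⟩

lemma g_le_f {A : Finset (Fin d)} (hA : M.rk A ≠ ⊤) : M.g A ≤ M.f A := by
  have := M.g_le (le_refl A) hA
  simpa [cost] using this

lemma g_empty : M.g ∅ = 0 := by
  have h0 : M.rk ∅ ≠ ⊤ := by rw [M.rk_empty]; exact (by simp : (0 : WithTop ℤ) ≠ ⊤)
  refine le_antisymm ?_ ?_
  · have := M.g_le (Finset.empty_subset ∅) h0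
    simpa [cost, M.f_empty] using this
  · apply Finset.le_inf'
    intro B hB
    rcases Finset.eq_empty_or_nonempty B with rfl | hBne
    · simp [cost, M.f_empty]
    · have h1 : (1 : ℤ) ≤ ((B \ ∅).card : ℤ) := by
        have : 1 ≤ (B \ ∅).card := by
          simpa [Finset.sdiff_empty] using Finset.card_pos.mpr hBne
        exact_mod_cast this
      have h2 : -(M.f B) ≤ M.bigM := M.bigM_ge B
      have h3 : M.bigM * 1 ≤ M.bigM * ((B \ ∅).card : ℤ) :=
        mul_le_mul_of_nonneg_left h1 M.bigM_nonneg
      simp only [cost]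
      linarith

lemma g_univ : M.g Finset.univ = M.f Finset.univ := by
  refine le_antisymm (M.g_le_f M.rk_univ_ne_top) ?_
  apply Finset.le_inf'
  intro B hB
  have hsub : Finset.univ ⊆ B := (M.mem_cand.mp hB).1
  have : B = Finset.univ := Finset.univ_subset_iff.mp hsub
  subst this
  simp [cost]

lemma card_ineq (A A' B B' : Finset (Fin d)) :
    ((B ∪ B') \ (A ∪ A')).card + ((B ∩ B') \ (A ∩ A')).card
      ≤ (B \ A).card + (B' \ A').card := by
  have hcard : ∀ S : Finset (Fin d), S.card = ∑ x : Fin d, (if x ∈ S then 1 else 0) := by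
    intro S
    rw [Finset.sum_ite_mem, Finset.univ_inter, Finset.sum_const, smul_eq_mul, mul_one]
  rw [hcard ((B ∪ B') \ (A ∪ A')), hcard ((B ∩ B') \ (A ∩ A')), hcard (B \ A),
    hcard (B' \ A'), ← Finset.sum_add_distrib, ← Finset.sum_add_distrib]
  apply Finset.sum_le_sum
  intro x _
  by_cases hb : x ∈ B <;> by_cases hb' : x ∈ B' <;> by_cases ha : x ∈ A <;>
    by_cases ha' : x ∈ A' <;> simp [ha, ha', hb, hb']

lemma g_submod (A A' : Finset (Fin d)) :
    M.g (A ∪ A') + M.g (A ∩ A') ≤ M.g A + M.g A' := by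
  obtain ⟨B, hAB, hB, hgB⟩ := M.g_spec A
  obtain ⟨B', hAB', hB', hgB'⟩ := M.g_spec A'
  obtain ⟨hu, hi, hf⟩ := M.f_submod hB hB'
  have h1 : M.g (A ∪ A') ≤ M.cost (A ∪ A') (B ∪ B') :=
    M.g_le (Finset.union_subset_union hAB hAB') hu
  have h2 : M.g (A ∩ A') ≤ M.cost (A ∩ A') (B ∩ B') :=
    M.g_le (Finset.inter_subset_inter hAB hAB') hi
  have hc : (((B ∪ B') \ (A ∪ A')).card : ℤ) + (((B ∩ B') \ (A ∩ A')).card : ℤ)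
      ≤ ((B \ A).card : ℤ) + ((B' \ A').card : ℤ) := by
    exact_mod_cast card_ineq A A' B B'
  have hM := mul_le_mul_of_nonneg_left hc M.bigM_nonneg
  simp only [cost] at h1 h2 hgB hgB'
  rw [hgB, hgB']
  linarith

/-- The greedy chain `{i : Fin d | i.val < n}`. -/
def chainE (n : ℕ) : Finset (Fin d) := Finset.univ.filter fun i => i.val < n

lemma chainE_zero : (chainE 0 : Finset (Fin d)) = ∅ := by
  ext i; simp [chainE]

lemma chainE_top : (chainE d : Finset (Fin d)) = Finset.univ := by
  ext i; simp [chainE, i.isLt]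

lemma greedy_le (A : Finset (Fin d)) (n : ℕ) :
    ∑ i ∈ A.filter (fun i => i.val < n),
        (M.g (chainE ((i : ℕ) + 1)) - M.g (chainE (i : ℕ)))
      ≤ M.g (A ∩ chainE n) := by
  induction n with
  | zero =>
    have h1 : A.filter (fun i => i.val < 0) = ∅ := by
      ext i; simp
    rw [h1, chainE_zero, Finset.inter_empty, M.g_empty, Finset.sum_empty]
  | succ n ih =>
    by_cases hn : ∃ i ∈ A, (i : ℕ) = n
    · obtain ⟨i0, hi0A, hi0⟩ := hn
      have hfilter : A.filter (fun i => i.val < n + 1)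
          = insert i0 (A.filter (fun i => i.val < n)) := by
        ext j
        simp only [Finset.mem_filter, Finset.mem_insert]
        constructor
        · rintro ⟨hjA, hj⟩
          rcases lt_or_ge (j : ℕ) n with h | h
          · exact Or.inr ⟨hjA, h⟩
          · have : (j : ℕ) = n := by omega
            exact Or.inl (Fin.ext (by rw [this, hi0]))
        · rintro (rfl | ⟨hjA, hj⟩)
          · exact ⟨hi0A, by omega⟩
          · exact ⟨hjA, by omega⟩
      have hnot : i0 ∉ A.filter (fun i => i.val < n) := by
        simp [hi0]
      have hunion : chainE n ∪ (A ∩ chainE (n + 1)) = (chainE (n + 1) : Finset (Fin d)) := by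
        ext x
        simp only [chainE, Finset.mem_union, Finset.mem_inter, Finset.mem_filter,
          Finset.mem_univ, true_and]
        constructor
        · rintro (h | ⟨_, h⟩) <;> omega
        · intro h
          rcases lt_or_ge (x : ℕ) n with h' | h'
          · exact Or.inl h'
          · have : (x : ℕ) = n := by omega
            have : x = i0 := Fin.ext (by rw [this, hi0])
            exact Or.inr ⟨this ▸ hi0A, h⟩
      have hinter : chainE n ∩ (A ∩ chainE (n + 1)) = A ∩ (chainE n : Finset (Fin d)) := by
        ext x
        simp only [chainE, Finset.mem_inter, Finset.mem_filter, Finset.mem_univ, true_and]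
        constructor
        · rintro ⟨h1, h2, _⟩; exact ⟨h2, h1⟩
        · rintro ⟨h1, h2⟩; exact ⟨h2, h1, by omega⟩
      have hsub := M.g_submod (chainE n) (A ∩ chainE (n + 1))
      rw [hunion, hinter] at hsub
      rw [hfilter, Finset.sum_insert hnot, hi0]
      linarith
    · push_neg at hn
      have hfilter : A.filter (fun i => i.val < n + 1) = A.filter (fun i => i.val < n) := by
        ext j
        simp only [Finset.mem_filter]
        constructor
        · rintro ⟨hjA, hj⟩
          have := hn j hjA
          exact ⟨hjA, by omega⟩
        · rintro ⟨hjA, hj⟩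
          exact ⟨hjA, by omega⟩
      have hinter : A ∩ chainE (n + 1) = A ∩ (chainE n : Finset (Fin d)) := by
        ext x
        simp only [chainE, Finset.mem_inter, Finset.mem_filter, Finset.mem_univ, true_and]
        constructor
        · rintro ⟨h1, h2⟩
          have := hn x h1
          exact ⟨h1, by omega⟩
        · rintro ⟨h1, h2⟩
          exact ⟨h1, by omega⟩
      rw [hfilter, hinter]
      exact ih

lemma greedy_le' (A : Finset (Fin d)) :
    ∑ i ∈ A, (M.g (chainE ((i : ℕ) + 1)) - M.g (chainE (i : ℕ))) ≤ M.g A := by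
  have h := M.greedy_le A d
  have h1 : A.filter (fun i => i.val < d) = A := by
    apply Finset.filter_true_of_mem
    intro i _
    exact i.isLt
  rw [h1, chainE_top, Finset.inter_univ] at h
  exact h

lemma greedy_sum_univ :
    ∑ i : Fin d, (M.g (chainE ((i : ℕ) + 1)) - M.g (chainE (i : ℕ)))
      = M.f Finset.univ := by
  rw [Fin.sum_univ_eq_sum_range (fun j => M.g (chainE (j + 1)) - M.g (chainE j)) d]
  rw [Finset.sum_range_sub (fun j => M.g (chainE j)) d]
  rw [chainE_top, chainE_zero, M.g_univ, M.g_empty, sub_zero]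

end Megamatroid

/-- For every megamatroid, the base polyhedron `Q(rk)` is nonempty. -/
theorem megaQ_nonempty (d : ℕ) (M : Megamatroid d) : (megaQ M).Nonempty := by
  refine ⟨fun i : Fin d =>
    ((M.g (Megamatroid.chainE ((i : ℕ) + 1)) - M.g (Megamatroid.chainE (i : ℕ)) : ℤ) : ℝ),
    ?_, ?_⟩
  · intro z hz
    have h1 := M.greedy_sum_univ
    have h2 : M.f Finset.univ = z := M.f_eq hz
    rw [h2] at h1
    push_cast [← h1]
    norm_num
  · intro A z hz
    have hA : M.rk A ≠ ⊤ := by rw [hz]; exact WithTop.coe_ne_top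
    have h1 := M.greedy_le' A
    have h2 := M.g_le_f hA
    have h3 : M.f A = z := M.f_eq hz
    have : ∑ i ∈ A, (M.g (Megamatroid.chainE ((i : ℕ) + 1))
        - M.g (Megamatroid.chainE (i : ℕ))) ≤ z := by linarith
    calc ∑ i ∈ A, ((M.g (Megamatroid.chainE ((i : ℕ) + 1))
          - M.g (Megamatroid.chainE (i : ℕ)) : ℤ) : ℝ)
        = ((∑ i ∈ A, (M.g (Megamatroid.chainE ((i : ℕ) + 1))
          - M.g (Megamatroid.chainE (i : ℕ))) : ℤ) : ℝ) := by push_cast; ring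
      _ ≤ (z : ℝ) := by exact_mod_cast this
end

section
/- Let rk be a megamatroid on {1,…,d}, let Π = Q(rk), and let A ⊆ B ⊆ {1,…,d}. Suppose rk_Π(A) < ∞, and let F = {y ∈ Π : Σ_{i∈A} y_i = rk_Π(A)}. Then sup_{y∈F} Σ_{i∈B} y_i = rk_Π(B), where both suprema are taken in the extended reals ℝ ∪ {−∞, +∞}. -/
open scoped BigOperators

/-- `rk_Π(S) = sup_{y ∈ Π} ∑_{i ∈ S} y i`, taken in the extended reals. -/
noncomputable def rkSet {d : ℕ} (P : Set (Fin d → ℝ)) (S : Finset (Fin d)) : EReal :=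
  ⨆ y ∈ P, ((∑ i ∈ S, y i : ℝ) : EReal)

open Finset
section Aux

/-- The linear functional `z ↦ ∑ i ∈ S, z i`. -/
def sumL {d : ℕ} (S : Finset (Fin d)) : (Fin d → ℝ) →ₗ[ℝ] ℝ where
  toFun z := ∑ i ∈ S, z i
  map_add' x y := by simp [Finset.sum_add_distrib]
  map_smul' c x := by simp [Finset.mul_sum]

@[simp] lemma sumL_apply {d : ℕ} (S : Finset (Fin d)) (z : Fin d → ℝ) :
    sumL S z = ∑ i ∈ S, z i := rfl

/-- A set is tight at `z` if its rank is finite and the constraint holds with equality. -/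
def Tight {d : ℕ} (M : Megamatroid d) (z : Fin d → ℝ) (S : Finset (Fin d)) : Prop :=
  ∃ n : ℤ, M.rk S = (n : WithTop ℤ) ∧ ∑ i ∈ S, z i = (n : ℝ)

lemma tight_empty {d : ℕ} (M : Megamatroid d) (z : Fin d → ℝ) : Tight M z ∅ :=
  ⟨0, by simpa using M.rk_empty, by simp⟩

lemma tight_univ {d : ℕ} (M : Megamatroid d) {z : Fin d → ℝ} (hz : z ∈ megaQ M)
    {t : ℤ} (ht : M.rk Finset.univ = (t : WithTop ℤ)) : Tight M z Finset.univ :=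
  ⟨t, ht, hz.1 t ht⟩

lemma tight_union_inter {d : ℕ} (M : Megamatroid d) {z : Fin d → ℝ} (hz : z ∈ megaQ M)
    {S T : Finset (Fin d)} (hS : Tight M z S) (hT : Tight M z T) :
    Tight M z (S ∪ T) ∧ Tight M z (S ∩ T) := by
  obtain ⟨a, ha, ha'⟩ := hS
  obtain ⟨c, hc, hc'⟩ := hT
  obtain ⟨hu, hi, hsm⟩ := M.submodular S T (ha ▸ WithTop.coe_ne_top) (hc ▸ WithTop.coe_ne_top)
  obtain ⟨u, hu'⟩ := WithTop.ne_top_iff_exists.1 hu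
  obtain ⟨v, hv'⟩ := WithTop.ne_top_iff_exists.1 hi
  rw [← hu', ← hv', ha, hc] at hsm
  have hsm' : (u : ℝ) + (v : ℝ) ≤ (a : ℝ) + (c : ℝ) := by exact_mod_cast hsm
  have h1 : ∑ i ∈ S ∪ T, z i ≤ (u : ℝ) := hz.2 _ u hu'.symm
  have h2 : ∑ i ∈ S ∩ T, z i ≤ (v : ℝ) := hz.2 _ v hv'.symm
  have h3 : ∑ i ∈ S ∪ T, z i + ∑ i ∈ S ∩ T, z i = ∑ i ∈ S, z i + ∑ i ∈ T, z i :=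
    Finset.sum_union_inter
  exact ⟨⟨u, hu'.symm, by linarith⟩, ⟨v, hv'.symm, by linarith⟩⟩

/-- Key exchange lemma: a maximizer of `∑_A` over `Q(rk) ∩ {∑_B ≥ c}` makes `A` tight. -/
lemma key_tight {d : ℕ} (M : Megamatroid d) (A B : Finset (Fin d)) (hAB : A ⊆ B)
    {t : ℤ} (ht : M.rk Finset.univ = (t : WithTop ℤ)) (c : ℝ) (z : Fin d → ℝ)
    (hz : z ∈ megaQ M) (hzB : c ≤ ∑ i ∈ B, z i)
    (hmax : ∀ u ∈ megaQ M, c ≤ ∑ i ∈ B, u i → ∑ i ∈ A, u i ≤ ∑ i ∈ A, z i) :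
    Tight M z A := by
  classical
  by_cases hblk : ∀ i ∈ A, ∀ j, j ∉ A → ∃ S : Finset (Fin d), Tight M z S ∧ i ∈ S ∧ j ∉ S
  · -- blocked case: A is tight
    have hblk' : ∀ i j : Fin d, ∃ S : Finset (Fin d),
        i ∈ A → j ∉ A → Tight M z S ∧ i ∈ S ∧ j ∉ S := by
      intro i j
      by_cases h : i ∈ A ∧ j ∉ A
      · obtain ⟨S, hS⟩ := hblk i h.1 j h.2
        exact ⟨S, fun _ _ => hS⟩
      · exact ⟨∅, fun h1 h2 => absurd ⟨h1, h2⟩ h⟩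
    choose S hS using hblk'
    set T : Fin d → Finset (Fin d) := fun i => Aᶜ.inf (S i) with hT
    have hTtight : ∀ i ∈ A, Tight M z (T i) := by
      intro i hi
      refine Finset.inf_induction (tight_univ M hz ht)
        (fun a ha b hb => by rw [Finset.inf_eq_inter]; exact (tight_union_inter M hz ha hb).2) ?_
      intro j hj
      exact (hS i j hi (Finset.mem_compl.1 hj)).1
    have hTmem : ∀ i ∈ A, i ∈ T i := by
      intro i hi
      have : {i} ≤ T i := Finset.le_inf fun j hj =>
        Finset.singleton_subset_iff.2 (hS i j hi (Finset.mem_compl.1 hj)).2.1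
      exact Finset.singleton_subset_iff.1 this
    have hTsub : ∀ i ∈ A, T i ⊆ A := by
      intro i hi k hk
      by_contra hk'
      have hle : T i ≤ S i k := Finset.inf_le (Finset.mem_compl.2 hk')
      exact (hS i k hi hk').2.2 (Finset.le_iff_subset.1 hle hk)
    have hU : A.sup T = A := by
      apply le_antisymm
      · exact Finset.sup_le fun i hi => hTsub i hi
      · intro i hi
        exact Finset.le_iff_subset.1 (Finset.le_sup hi) (hTmem i hi)
    have : Tight M z (A.sup T) := by
      exact Finset.sup_induction (tight_empty M z)
        (fun a ha b hb => by rw [Finset.sup_eq_union]; exact (tight_union_inter M hz ha hb).1) hTtight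
    rwa [hU] at this
  · -- unblocked case: can move, contradicting maximality
    exfalso
    push_neg at hblk
    obtain ⟨i, hi, j, hj, hsep⟩ := hblk
    -- hsep : ∀ S, Tight M z S → i ∈ S → j ∈ S
    have hij : i ≠ j := fun h => hj (h ▸ hi)
    set 𝒮 : Finset (Finset (Fin d)) :=
      Finset.univ.filter (fun S => i ∈ S ∧ j ∉ S ∧ M.rk S ≠ ⊤) with h𝒮
    set slack : Finset (Fin d) → ℝ :=
      fun S => (((M.rk S).untopD 0 : ℤ) : ℝ) - ∑ k ∈ S, z k with hslack
    set ε : ℝ := if h : 𝒮.Nonempty then min 1 (𝒮.inf' h slack) else 1 with hε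
    have hslackpos : ∀ S ∈ 𝒮, 0 < slack S := by
      intro S hSmem
      rw [h𝒮, Finset.mem_filter] at hSmem
      obtain ⟨-, hiS, hjS, hrk⟩ := hSmem
      obtain ⟨m, hm⟩ := WithTop.ne_top_iff_exists.1 hrk
      have hle : ∑ k ∈ S, z k ≤ (m : ℝ) := hz.2 S m hm.symm
      have hne : ∑ k ∈ S, z k ≠ (m : ℝ) := by
        intro h
        exact hjS (hsep S ⟨m, hm.symm, h⟩ hiS)
      have hm' : M.rk S = (m : WithTop ℤ) := hm.symm
      simp only [hslack, hm', WithTop.untopD_coe]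
      exact sub_pos.2 (lt_of_le_of_ne hle hne)
    have hεpos : 0 < ε := by
      rw [hε]
      split_ifs with h
      · exact lt_min one_pos ((Finset.lt_inf'_iff h).2 (fun S hSmem => hslackpos S hSmem))
      · exact one_pos
    have hεle : ∀ S : Finset (Fin d), i ∈ S → j ∉ S → ∀ m : ℤ,
        M.rk S = (m : WithTop ℤ) → ∑ k ∈ S, z k + ε ≤ (m : ℝ) := by
      intro S hiS hjS m hm
      have hSmem : S ∈ 𝒮 := by
        rw [h𝒮, Finset.mem_filter]
        exact ⟨Finset.mem_univ S, hiS, hjS, hm ▸ WithTop.coe_ne_top⟩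
      have hne : 𝒮.Nonempty := ⟨S, hSmem⟩
      have h1 : ε ≤ slack S := by
        rw [hε, dif_pos hne]
        exact (min_le_right _ _).trans (Finset.inf'_le slack hSmem)
      simp only [hslack, hm, WithTop.untopD_coe] at h1
      linarith
    set z' : Fin d → ℝ :=
      fun k => z k + (if k = i then ε else 0) - (if k = j then ε else 0) with hz'def
    have hsum : ∀ S : Finset (Fin d), ∑ k ∈ S, z' k =
        ∑ k ∈ S, z k + (if i ∈ S then ε else 0) - (if j ∈ S then ε else 0) := by
      intro S
      rw [hz'def]
      simp only [Finset.sum_sub_distrib, Finset.sum_add_distrib]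
      rw [Finset.sum_ite_eq' S i (fun _ => ε), Finset.sum_ite_eq' S j (fun _ => ε)]
    have hz' : z' ∈ megaQ M := by
      constructor
      · intro n hn
        rw [hsum, if_pos (Finset.mem_univ i), if_pos (Finset.mem_univ j)]
        have := hz.1 n hn
        linarith
      · intro S n hn
        rw [hsum]
        have hfeas : ∑ k ∈ S, z k ≤ (n : ℝ) := hz.2 S n hn
        by_cases hiS : i ∈ S
        · by_cases hjS : j ∈ S
          · rw [if_pos hiS, if_pos hjS]; linarith
          · rw [if_pos hiS, if_neg hjS]
            have := hεle S hiS hjS n hn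
            linarith
        · rw [if_neg hiS]
          split_ifs <;> linarith
    have hz'B : c ≤ ∑ k ∈ B, z' k := by
      rw [hsum, if_pos (hAB hi)]
      split_ifs <;> linarith
    have hz'A : ∑ k ∈ A, z' k = ∑ k ∈ A, z k + ε := by
      rw [hsum, if_pos hi, if_neg hj]
      ring
    have := hmax z' hz' hz'B
    rw [hz'A] at this
    linarith


lemma cross_eval {V : Type} [AddCommGroup V] [Module ℝ V] (ψ : V →ₗ[ℝ] ℝ) (z w : V) (t : ℝ) :
    ψ (z + t • (w - z)) = ψ z + t * (ψ w - ψ z) := by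
  simp [map_add, map_smul, map_sub, smul_eq_mul]

lemma cross_le {V : Type} [AddCommGroup V] [Module ℝ V] (ψ : V →ₗ[ℝ] ℝ) (z w : V) (t : ℝ)
    (h0 : 0 ≤ t) (h1 : t ≤ 1) (c : ℝ) (hz : ψ z ≤ c) (hw : ψ w ≤ c) :
    ψ (z + t • (w - z)) ≤ c := by
  rw [cross_eval]
  nlinarith [mul_nonneg h0 (sub_nonneg.2 hw), mul_nonneg (sub_nonneg.2 h1) (sub_nonneg.2 hz)]

/-- A linear functional bounded above on a nonempty set cut out by finitely many
linear inequalities attains its maximum there. -/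
lemma lp_max (n : ℕ) : ∀ {ι : Type} (V : Type) [AddCommGroup V] [Module ℝ V]
    (s : Finset ι), s.card ≤ n → ∀ (f : ι → V →ₗ[ℝ] ℝ) (b : ι → ℝ) (g : V →ₗ[ℝ] ℝ)
    (x₀ : V), (∀ k ∈ s, f k x₀ ≤ b k) → ∀ (M : ℝ),
    (∀ x : V, (∀ k ∈ s, f k x ≤ b k) → g x ≤ M) →
    ∃ x, (∀ k ∈ s, f k x ≤ b k) ∧ ∀ z, (∀ k ∈ s, f k z ≤ b k) → g z ≤ g x := by
  induction n with
  | zero =>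
    intro ι V _ _ s hs f b g x₀ hx₀ M hbd
    have hse : s = ∅ := Finset.card_eq_zero.1 (Nat.le_zero.1 hs)
    subst hse
    have hg0 : ∀ v : V, g v = 0 := by
      intro v
      by_contra h
      have h1 : ∀ t : ℝ, t * g v ≤ M := by
        intro t
        have := hbd (t • v) (by simp)
        simpa [map_smul, smul_eq_mul] using this
      rcases lt_or_gt_of_ne h with h' | h'
      · have := h1 ((M + 1) / g v)
        rw [div_mul_cancel₀ _ (ne_of_lt h')] at this
        linarith
      · have := h1 ((M + 1) / g v)
        rw [div_mul_cancel₀ _ (ne_of_gt h')] at this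
        linarith
    exact ⟨x₀, by simp, fun z _ => by simp [hg0]⟩
  | succ n IH =>
    intro ι V _ _ s hs f b g x₀ hx₀ M hbd
    haveI := Classical.decEq ι
    rcases Nat.lt_or_ge s.card (n + 1) with hlt | hge
    · exact IH V s (Nat.lt_succ_iff.1 hlt) f b g x₀ hx₀ M hbd
    · have hne : s.Nonempty := Finset.card_pos.1 (by omega)
      obtain ⟨k₀, hk₀⟩ := hne
      set s' := s.erase k₀ with hs'
      have hcard' : s'.card ≤ n := by
        rw [hs', Finset.card_erase_of_mem hk₀]
        omega
      have hsub : ∀ k ∈ s', k ∈ s := fun k hk => Finset.mem_of_mem_erase hk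
      have hmem : ∀ k ∈ s, k = k₀ ∨ k ∈ s' := by
        intro k hk
        by_cases h : k = k₀
        · exact Or.inl h
        · exact Or.inr (Finset.mem_erase.2 ⟨h, hk⟩)
      by_contra hcon
      push_neg at hcon
      -- obtain w ∈ P' with b k₀ < f k₀ w dominating g on P
      have hw : ∃ w, (∀ k ∈ s', f k w ≤ b k) ∧ b k₀ < f k₀ w ∧
          ∀ z, (∀ k ∈ s, f k z ≤ b k) → g z ≤ g w := by
        by_cases hb' : ∀ x, (∀ k ∈ s', f k x ≤ b k) → g x ≤ M
        · obtain ⟨x', hx'P, hx'max⟩ :=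
            IH V s' hcard' f b g x₀ (fun k hk => hx₀ k (hsub k hk)) M hb'
          by_cases hφ : f k₀ x' ≤ b k₀
          · exfalso
            have hx'Pfull : ∀ k ∈ s, f k x' ≤ b k := by
              intro k hk
              rcases hmem k hk with rfl | hk'
              · exact hφ
              · exact hx'P k hk'
            obtain ⟨z, hz, hlt⟩ := hcon x' hx'Pfull
            exact absurd (hx'max z fun k hk => hz k (hsub k hk)) (not_le.2 hlt)
          · exact ⟨x', hx'P, lt_of_not_ge hφ,
              fun z hz => hx'max z fun k hk => hz k (hsub k hk)⟩
        · push_neg at hb'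
          obtain ⟨w, hwP, hwM⟩ := hb'
          refine ⟨w, hwP, ?_, fun z hz => (hbd z hz).trans hwM.le⟩
          by_contra hφ
          push_neg at hφ
          have : g w ≤ M := by
            refine hbd w ?_
            intro k hk
            rcases hmem k hk with rfl | hk'
            · exact hφ
            · exact hwP k hk'
          linarith
      obtain ⟨w, hwP', hwφ, hwtop⟩ := hw
      have hφx₀ : f k₀ x₀ ≤ b k₀ := hx₀ k₀ hk₀
      -- crossing point c with f k₀ c = b k₀, in P'
      set t₀ := (b k₀ - f k₀ x₀) / (f k₀ w - f k₀ x₀) with ht₀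
      have hD : 0 < f k₀ w - f k₀ x₀ := by linarith
      have ht₀0 : 0 ≤ t₀ := div_nonneg (by linarith) hD.le
      have ht₀1 : t₀ ≤ 1 := (div_le_one hD).2 (by linarith)
      set c := x₀ + t₀ • (w - x₀) with hc
      have hφc : f k₀ c = b k₀ := by
        rw [hc, cross_eval, ht₀, div_mul_cancel₀ _ hD.ne']
        ring
      have hcP' : ∀ k ∈ s', f k c ≤ b k :=
        fun k hk => cross_le (f k) x₀ w t₀ ht₀0 ht₀1 (b k) (hx₀ k (hsub k hk)) (hwP' k hk)
      -- reduce to ker (f k₀)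
      set W := LinearMap.ker (f k₀) with hW
      have hmemP : ∀ v : V, v ∈ W → (∀ k ∈ s', f k v ≤ b k - f k c) →
          ∀ k ∈ s, f k (c + v) ≤ b k := by
        intro v hv hvP k hk
        rcases hmem k hk with rfl | hk'
        · have : f k v = 0 := hv
          rw [map_add, this, hφc, add_zero]
        · have := hvP k hk'
          rw [map_add]; linarith
      obtain ⟨v', hv'P, hv'max⟩ := IH (↥W) s' hcard'
        (fun k => (f k).comp W.subtype) (fun k => b k - f k c) (g.comp W.subtype)
        0 (by
          intro k hk
          simp only [LinearMap.comp_apply, Submodule.coe_subtype, Submodule.coe_zero, map_zero]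
          linarith [hcP' k hk])
        (M - g c) (by
          intro v hvP
          have := hbd (c + ↑v) (hmemP ↑v v.2 (by
            intro k hk
            exact hvP k hk))
          simp only [LinearMap.comp_apply, Submodule.coe_subtype, map_add] at this ⊢
          linarith)
      set x' := c + (v' : V) with hx'
      have hx'P : ∀ k ∈ s, f k x' ≤ b k := hmemP ↑v' v'.2 (by
        intro k hk
        simpa using hv'P k hk)
      obtain ⟨z, hzP, hzlt⟩ := hcon x' hx'P
      -- show g z ≤ g x', contradiction
      have hφz : f k₀ z ≤ b k₀ := hzP k₀ hk₀
      set t := (b k₀ - f k₀ z) / (f k₀ w - f k₀ z) with ht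
      have hDz : 0 < f k₀ w - f k₀ z := by linarith
      have ht0 : 0 ≤ t := div_nonneg (by linarith) hDz.le
      have ht1 : t ≤ 1 := (div_le_one hDz).2 (by linarith)
      set u := z + t • (w - z) with hu
      have hφu : f k₀ u = b k₀ := by
        rw [hu, cross_eval, ht, div_mul_cancel₀ _ hDz.ne']
        ring
      have huP' : ∀ k ∈ s', f k u ≤ b k :=
        fun k hk => cross_le (f k) z w t ht0 ht1 (b k) (hzP k (hsub k hk)) (hwP' k hk)
      have hgu : g z ≤ g u := by
        rw [hu, cross_eval]
        have hgzw : g z ≤ g w := hwtop z hzP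
        nlinarith [mul_nonneg ht0 (sub_nonneg.2 hgzw)]
      have humem : u - c ∈ W := by
        rw [hW, LinearMap.mem_ker, map_sub, hφu, hφc, sub_self]
      have hule : g u ≤ g x' := by
        have h2 := hv'max ⟨u - c, humem⟩ (by
          intro k hk
          simp only [LinearMap.comp_apply, Submodule.coe_subtype, map_sub]
          linarith [huP' k hk])
        simp only [LinearMap.comp_apply, Submodule.coe_subtype, map_sub] at h2
        have h3 : g x' = g c + g ↑v' := by rw [hx', map_add]
        linarith
      exact absurd hzlt (not_lt.2 (hgu.trans hule))

open scoped Classical in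
noncomputable def lpF {d : ℕ} (M : Megamatroid d) (B : Finset (Fin d)) :
    Finset (Fin d) ⊕ Bool → (Fin d → ℝ) →ₗ[ℝ] ℝ
  | Sum.inl S => if M.rk S = ⊤ then 0 else sumL S
  | Sum.inr true => -(sumL Finset.univ)
  | Sum.inr false => -(sumL B)

noncomputable def lpb {d : ℕ} (M : Megamatroid d) (c t : ℝ) :
    Finset (Fin d) ⊕ Bool → ℝ
  | Sum.inl S => ((WithTop.untopD 0 (M.rk S) : ℤ) : ℝ)
  | Sum.inr true => -t
  | Sum.inr false => -c

lemma lp_char {d : ℕ} (M : Megamatroid d) (B : Finset (Fin d)) (c : ℝ) (t : ℤ)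
    (ht : M.rk Finset.univ = (t : WithTop ℤ)) (x : Fin d → ℝ) :
    (∀ k, lpF M B k x ≤ lpb M c (t : ℝ) k) ↔ (x ∈ megaQ M ∧ c ≤ ∑ i ∈ B, x i) := by
  constructor
  · intro h
    have hB : c ≤ ∑ i ∈ B, x i := by
      have := h (Sum.inr false)
      simp only [lpF, lpb, LinearMap.neg_apply, sumL_apply] at this
      linarith
    have huniv : ∑ i, x i = (t : ℝ) := by
      have h1 := h (Sum.inl Finset.univ)
      have h2 := h (Sum.inr true)
      simp only [lpF, lpb, ht, WithTop.coe_ne_top, if_false, sumL_apply,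
        LinearMap.neg_apply, WithTop.untopD_coe] at h1 h2
      linarith
    refine ⟨⟨?_, ?_⟩, hB⟩
    · intro n hn
      rw [ht] at hn
      rwa [← WithTop.coe_inj.1 hn]
    · intro S n hn
      have := h (Sum.inl S)
      simp only [lpF, lpb, hn, WithTop.coe_ne_top, if_false, sumL_apply,
        WithTop.untopD_coe] at this
      exact this
  · rintro ⟨hx, hB⟩ k
    rcases k with S | b
    · by_cases hS : M.rk S = ⊤
      · simp [lpF, lpb, hS]
      · obtain ⟨m, hm⟩ := WithTop.ne_top_iff_exists.1 hS
        simp only [lpF, lpb, if_neg hS, sumL_apply, ← hm, WithTop.untopD_coe]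
        exact hx.2 S m hm.symm
    · cases b
      · simp only [lpF, lpb, LinearMap.neg_apply, sumL_apply, neg_le_neg_iff]
        exact hB
      · simp only [lpF, lpb, LinearMap.neg_apply, sumL_apply, neg_le_neg_iff]
        exact (hx.1 t ht).ge

end Aux

/-- If `A ⊆ B`, `rk_Π(A) < ∞` and `F` is the subset of `Π = Q(rk)` where `∑_{i∈A} y_i`
attains the value `rk_Π(A)`, then `rk_F(B) = rk_Π(B)`. -/
theorem rkSet_face_eq (d : ℕ) (M : Megamatroid d) (A B : Finset (Fin d)) (hAB : A ⊆ B)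
    (hfin : rkSet (megaQ M) A < ⊤) :
    rkSet {y ∈ megaQ M | ((∑ i ∈ A, y i : ℝ) : EReal) = rkSet (megaQ M) A} B
      = rkSet (megaQ M) B := by
  classical
  obtain ⟨t, ht'⟩ := WithTop.ne_top_iff_exists.1 M.rk_univ_ne_top
  have ht : M.rk Finset.univ = (t : WithTop ℤ) := ht'.symm
  apply le_antisymm
  · exact iSup₂_le fun x hx =>
      le_iSup₂ (f := fun (u : Fin d → ℝ) (_ : u ∈ megaQ M) => ((∑ i ∈ B, u i : ℝ) : EReal))
        x hx.1
  · refine iSup₂_le fun y hy => ?_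
    have hrbot : rkSet (megaQ M) A ≠ ⊥ := by
      have h1 : ((∑ i ∈ A, y i : ℝ) : EReal) ≤ rkSet (megaQ M) A :=
        le_iSup₂ (f := fun (u : Fin d → ℝ) (_ : u ∈ megaQ M) => ((∑ i ∈ A, u i : ℝ) : EReal))
          y hy
      intro h
      rw [h, le_bot_iff] at h1
      exact EReal.coe_ne_bot _ h1
    have hrtop : rkSet (megaQ M) A ≠ ⊤ := hfin.ne
    set Mr := (rkSet (megaQ M) A).toReal with hMr
    have hbound : ∀ x ∈ megaQ M, ∑ i ∈ A, x i ≤ Mr := by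
      intro x hx
      have h1 : ((∑ i ∈ A, x i : ℝ) : EReal) ≤ rkSet (megaQ M) A :=
        le_iSup₂ (f := fun (u : Fin d → ℝ) (_ : u ∈ megaQ M) => ((∑ i ∈ A, u i : ℝ) : EReal))
          x hx
      rw [← EReal.coe_toReal hrtop hrbot] at h1
      exact_mod_cast h1
    set c := ∑ i ∈ B, y i with hc
    obtain ⟨z, hzP, hzmax⟩ := lp_max (Finset.univ : Finset (Finset (Fin d) ⊕ Bool)).card
      (Fin d → ℝ) Finset.univ le_rfl (lpF M B) (lpb M c (t : ℝ)) (sumL A) y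
      (fun k _ => (lp_char M B c t ht y).2 ⟨hy, le_rfl⟩ k) Mr
      (fun x hx => hbound x ((lp_char M B c t ht x).1 fun k => hx k (Finset.mem_univ k)).1)
    obtain ⟨hzQ, hzB⟩ := (lp_char M B c t ht z).1 fun k => hzP k (Finset.mem_univ k)
    have hmax' : ∀ u ∈ megaQ M, c ≤ ∑ i ∈ B, u i → ∑ i ∈ A, u i ≤ ∑ i ∈ A, z i := by
      intro u hu hcu
      have := hzmax u fun k _ => (lp_char M B c t ht u).2 ⟨hu, hcu⟩ k
      simpa using this
    obtain ⟨n, hnA, hnz⟩ := key_tight M A B hAB ht c z hzQ hzB hmax'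
    have hzF : ((∑ i ∈ A, z i : ℝ) : EReal) = rkSet (megaQ M) A := by
      apply le_antisymm
      · exact le_iSup₂ (f := fun (u : Fin d → ℝ) (_ : u ∈ megaQ M) =>
          ((∑ i ∈ A, u i : ℝ) : EReal)) z hzQ
      · refine iSup₂_le fun w hw => ?_
        have h2 : ∑ i ∈ A, w i ≤ ∑ i ∈ A, z i := by
          rw [hnz]
          exact hw.2 A n hnA
        exact_mod_cast h2
    have hmem : z ∈ {u ∈ megaQ M | ((∑ i ∈ A, u i : ℝ) : EReal) = rkSet (megaQ M) A} :=
      ⟨hzQ, hzF⟩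
    calc ((∑ i ∈ B, y i : ℝ) : EReal) ≤ ((∑ i ∈ B, z i : ℝ) : EReal) := by exact_mod_cast hzB
      _ ≤ _ := le_iSup₂ (f := fun (u : Fin d → ℝ)
          (_ : u ∈ {u ∈ megaQ M | ((∑ i ∈ A, u i : ℝ) : EReal) = rkSet (megaQ M) A}) =>
          ((∑ i ∈ B, u i : ℝ) : EReal)) z hmem
end

section
/- Let rk be a megamatroid on {1,…,d} with d ≥ 1, let Π = Q(rk), let ∅ ⊂ X_1 ⊂ X_2 ⊂ ⋯ ⊂ X_d = {1,…,d} be a maximal chain of subsets (so |X_j| = j for all j), and let α_1,…,α_d be real numbers with α_1,…,α_{d−1} ≥ 0. Then sup_{y∈Π} Σ_{j=1}^d α_j Σ_{i∈X_j} y_i = Σ_{j=1}^d α_j · rk_Π(X_j), where the suprema and the arithmetic are in the extended reals ℝ ∪ {−∞, +∞} with the convention 0·(+∞) = 0. -/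
open scoped BigOperators symmDiff

namespace SupChainAux

variable {d : ℕ} (M : Megamatroid d)

noncomputable def Lfin : Finset (Finset (Fin d)) :=
  Finset.univ.filter (fun A => M.rk A ≠ ⊤)

lemma mem_Lfin {A : Finset (Fin d)} : A ∈ Lfin M ↔ M.rk A ≠ ⊤ := by
  simp [Lfin]

lemma empty_mem_Lfin : ∅ ∈ Lfin M := by
  simp [Lfin, M.rk_empty]

lemma Lfin_nonempty : (Lfin M).Nonempty := ⟨∅, empty_mem_Lfin M⟩

lemma univ_mem_Lfin : Finset.univ ∈ Lfin M := by
  simp [Lfin, M.rk_univ_ne_top]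

noncomputable def rkR (A : Finset (Fin d)) : ℝ := ((WithTop.untopD 0 (M.rk A) : ℤ) : ℝ)

lemma rk_eq_coe_rkR {A : Finset (Fin d)} (hA : A ∈ Lfin M) :
    M.rk A = ((WithTop.untopD 0 (M.rk A) : ℤ) : WithTop ℤ) := by
  rw [mem_Lfin] at hA
  obtain ⟨z, hz⟩ := WithTop.ne_top_iff_exists.1 hA
  rw [← hz, WithTop.untopD_coe]

lemma rkR_empty : rkR M ∅ = 0 := by
  simp [rkR, M.rk_empty]

lemma megaQ_sum_univ {y : Fin d → ℝ} (hy : y ∈ megaQ M) :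
    ∑ i, y i = rkR M Finset.univ :=
  hy.1 _ (rk_eq_coe_rkR M (univ_mem_Lfin M))

lemma megaQ_le {y : Fin d → ℝ} (hy : y ∈ megaQ M) {A : Finset (Fin d)}
    (hA : A ∈ Lfin M) : ∑ i ∈ A, y i ≤ rkR M A :=
  hy.2 A _ (rk_eq_coe_rkR M hA)

lemma mem_megaQ_of {y : Fin d → ℝ} (h1 : ∑ i, y i = rkR M Finset.univ)
    (h2 : ∀ A ∈ Lfin M, ∑ i ∈ A, y i ≤ rkR M A) : y ∈ megaQ M := by
  constructor
  · intro z hz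
    rw [h1, rkR]
    rw [hz, WithTop.untopD_coe]
  · intro A z hz
    have hA : A ∈ Lfin M := (mem_Lfin M).2 (by rw [hz]; exact WithTop.coe_ne_top)
    have := h2 A hA
    rwa [rkR, hz, WithTop.untopD_coe] at this

lemma rkR_submodular {A B : Finset (Fin d)} (hA : A ∈ Lfin M) (hB : B ∈ Lfin M) :
    A ∪ B ∈ Lfin M ∧ A ∩ B ∈ Lfin M ∧
      rkR M (A ∪ B) + rkR M (A ∩ B) ≤ rkR M A + rkR M B := by
  obtain ⟨h1, h2, h3⟩ := M.submodular A B ((mem_Lfin M).1 hA) ((mem_Lfin M).1 hB)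
  refine ⟨(mem_Lfin M).2 h1, (mem_Lfin M).2 h2, ?_⟩
  rw [rk_eq_coe_rkR M ((mem_Lfin M).2 h1), rk_eq_coe_rkR M ((mem_Lfin M).2 h2)] at h3
  rw [rk_eq_coe_rkR M hA, rk_eq_coe_rkR M hB] at h3
  rw [← WithTop.coe_add, ← WithTop.coe_add, WithTop.coe_le_coe] at h3
  unfold rkR
  have h4 : ((WithTop.untopD 0 (M.rk (A ∪ B)) + WithTop.untopD 0 (M.rk (A ∩ B)) : ℤ) : ℝ)
      ≤ ((WithTop.untopD 0 (M.rk A) + WithTop.untopD 0 (M.rk B) : ℤ) : ℝ) := by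
    exact_mod_cast h3
  push_cast at h4
  linarith

lemma card_symmDiff_ineq (A1 A2 B1 B2 : Finset (Fin d)) :
    (((A1 ∪ A2) ∆ (B1 ∪ B2)).card : ℝ) + (((A1 ∩ A2) ∆ (B1 ∩ B2)).card : ℝ)
      ≤ ((A1 ∆ B1).card : ℝ) + ((A2 ∆ B2).card : ℝ) := by
  have hc : ∀ S : Finset (Fin d), S.card = ∑ x, (if x ∈ S then 1 else 0) := by
    intro S
    rw [Finset.sum_ite_mem, Finset.univ_inter, Finset.card_eq_sum_ones]
  have key : ((A1 ∪ A2) ∆ (B1 ∪ B2)).card + ((A1 ∩ A2) ∆ (B1 ∩ B2)).card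
      ≤ (A1 ∆ B1).card + (A2 ∆ B2).card := by
    rw [hc ((A1 ∪ A2) ∆ (B1 ∪ B2)), hc ((A1 ∩ A2) ∆ (B1 ∩ B2)), hc (A1 ∆ B1), hc (A2 ∆ B2),
      ← Finset.sum_add_distrib, ← Finset.sum_add_distrib]
    apply Finset.sum_le_sum
    intro x _
    by_cases h1 : x ∈ A1 <;> by_cases h2 : x ∈ A2 <;> by_cases h3 : x ∈ B1 <;>
      by_cases h4 : x ∈ B2 <;>
      simp [Finset.mem_symmDiff, h1, h2, h3, h4]
  exact_mod_cast key

noncomputable def gN (N : ℝ) (A : Finset (Fin d)) : ℝ :=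
  (Lfin M).inf' (Lfin_nonempty M) (fun B => rkR M B + N * ((A ∆ B).card : ℝ))

lemma gN_le {N : ℝ} {B : Finset (Fin d)} (hB : B ∈ Lfin M) (A : Finset (Fin d)) :
    gN M N A ≤ rkR M B + N * ((A ∆ B).card : ℝ) :=
  Finset.inf'_le _ hB

lemma le_gN {N : ℝ} {A : Finset (Fin d)} {c : ℝ}
    (h : ∀ B ∈ Lfin M, c ≤ rkR M B + N * ((A ∆ B).card : ℝ)) : c ≤ gN M N A :=
  Finset.le_inf' _ _ h

lemma gN_mono {N N' : ℝ} (h : N ≤ N') (A : Finset (Fin d)) : gN M N A ≤ gN M N' A := by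
  refine le_gN M (fun B hB => ?_)
  refine le_trans (gN_le M hB A) ?_
  have : N * ((A ∆ B).card : ℝ) ≤ N' * ((A ∆ B).card : ℝ) :=
    mul_le_mul_of_nonneg_right h (by positivity)
  linarith

lemma gN_submodular {N : ℝ} (hN : 0 ≤ N) (A B : Finset (Fin d)) :
    gN M N (A ∪ B) + gN M N (A ∩ B) ≤ gN M N A + gN M N B := by
  obtain ⟨B1, hB1, e1⟩ := Finset.exists_mem_eq_inf' (Lfin_nonempty M)
    (fun C => rkR M C + N * ((A ∆ C).card : ℝ))
  obtain ⟨B2, hB2, e2⟩ := Finset.exists_mem_eq_inf' (Lfin_nonempty M)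
    (fun C => rkR M C + N * ((B ∆ C).card : ℝ))
  obtain ⟨hu, hi, hr⟩ := rkR_submodular M hB1 hB2
  have l1 : gN M N (A ∪ B) ≤ rkR M (B1 ∪ B2) + N * (((A ∪ B) ∆ (B1 ∪ B2)).card : ℝ) :=
    gN_le M hu _
  have l2 : gN M N (A ∩ B) ≤ rkR M (B1 ∩ B2) + N * (((A ∩ B) ∆ (B1 ∩ B2)).card : ℝ) :=
    gN_le M hi _
  have l3 := card_symmDiff_ineq A B B1 B2
  have l4 : N * (((A ∪ B) ∆ (B1 ∪ B2)).card : ℝ) + N * (((A ∩ B) ∆ (B1 ∩ B2)).card : ℝ)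
      ≤ N * ((A ∆ B1).card : ℝ) + N * ((B ∆ B2).card : ℝ) := by
    rw [← mul_add, ← mul_add]
    exact mul_le_mul_of_nonneg_left l3 hN
  have e1' : gN M N A = rkR M B1 + N * ((A ∆ B1).card : ℝ) := e1
  have e2' : gN M N B = rkR M B2 + N * ((B ∆ B2).card : ℝ) := e2
  rw [e1', e2']
  linarith

noncomputable def C0 : ℝ := (Lfin M).sup' (Lfin_nonempty M) (fun B => |rkR M B|)

noncomputable def N0 : ℝ := 2 * C0 M + 1

lemma abs_rkR_le_C0 {A : Finset (Fin d)} (hA : A ∈ Lfin M) : |rkR M A| ≤ C0 M :=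
  Finset.le_sup' (fun B => |rkR M B|) hA

lemma C0_nonneg : 0 ≤ C0 M :=
  le_trans (abs_nonneg _) (abs_rkR_le_C0 M (empty_mem_Lfin M))

lemma N0_pos : 0 < N0 M := by
  have := C0_nonneg M
  unfold N0
  linarith

lemma one_le_card_symmDiff {A B : Finset (Fin d)} (h : A ≠ B) :
    (1 : ℝ) ≤ ((A ∆ B).card : ℝ) := by
  have : A ∆ B ≠ ∅ := by
    intro hc
    exact h (symmDiff_eq_bot.1 hc)
  have : 0 < (A ∆ B).card := Finset.card_pos.2 (Finset.nonempty_iff_ne_empty.2 this)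
  exact_mod_cast this

lemma gN_eq_rkR {N : ℝ} (hN : N0 M ≤ N) {A : Finset (Fin d)} (hA : A ∈ Lfin M) :
    gN M N A = rkR M A := by
  have hN0 : 0 ≤ N := le_trans (N0_pos M).le hN
  apply le_antisymm
  · have h := gN_le M (N := N) hA A
    simpa [symmDiff_self] using h
  · refine le_gN M (fun B hB => ?_)
    by_cases hAB : A = B
    · subst hAB
      simp [symmDiff_self]
    · have h1 := one_le_card_symmDiff hAB
      have h2 : |rkR M A| ≤ C0 M := abs_rkR_le_C0 M hA
      have h3 : |rkR M B| ≤ C0 M := abs_rkR_le_C0 M hB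
      have h4 : N * 1 ≤ N * ((A ∆ B).card : ℝ) := mul_le_mul_of_nonneg_left h1 hN0
      have h5 : N0 M ≤ N := hN
      unfold N0 at h5
      have h6 := abs_le.1 h2
      have h7 := abs_le.1 h3
      linarith

lemma sum_le_gN {y : Fin d → ℝ} (hy : y ∈ megaQ M) (S : Finset (Fin d)) {N : ℝ}
    (hN : ∑ i, |y i| ≤ N) : ∑ i ∈ S, y i ≤ gN M N S := by
  have hN0 : 0 ≤ N := le_trans (Finset.sum_nonneg (fun i _ => abs_nonneg _)) hN
  refine le_gN M (fun B hB => ?_)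
  by_cases hSB : S = B
  · subst hSB
    have := megaQ_le M hy hB
    have h0 : 0 ≤ N * ((S ∆ S).card : ℝ) := by positivity
    linarith
  · have hsplitS := Finset.sum_inter_add_sum_sdiff S B y
    have hsplitB := Finset.sum_inter_add_sum_sdiff B S y
    have hd1 : ∑ i ∈ S \ B, y i ≤ ∑ i ∈ S \ B, |y i| :=
      Finset.sum_le_sum (fun i _ => le_abs_self _)
    have hd2 : -(∑ i ∈ B \ S, y i) ≤ ∑ i ∈ B \ S, |y i| := by
      rw [← Finset.sum_neg_distrib]
      exact Finset.sum_le_sum (fun i _ => neg_le_abs _)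
    have hsd : ∑ i ∈ S \ B, |y i| + ∑ i ∈ B \ S, |y i| = ∑ i ∈ S ∆ B, |y i| := by
      rw [symmDiff_def]
      exact (Finset.sum_union (disjoint_sdiff_sdiff)).symm
    have hle : ∑ i ∈ S ∆ B, |y i| ≤ ∑ i, |y i| :=
      Finset.sum_le_sum_of_subset_of_nonneg (Finset.subset_univ _)
        (fun i _ _ => abs_nonneg _)
    have hcard := one_le_card_symmDiff hSB
    have h4 : N * 1 ≤ N * ((S ∆ B).card : ℝ) := mul_le_mul_of_nonneg_left hcard hN0
    have hB' := megaQ_le M hy hB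
    have hBS : B ∩ S = S ∩ B := Finset.inter_comm B S
    rw [hBS] at hsplitB
    linarith

section Chain

variable (hd : 1 ≤ d) (X : Fin d → Finset (Fin d)) (hmono : StrictMono X)
  (hcard : ∀ j : Fin d, (X j).card = (j : ℕ) + 1)
  (htop : X ⟨d - 1, Nat.sub_lt hd Nat.one_pos⟩ = Finset.univ)

def Xe : ℕ → Finset (Fin d)
  | 0 => ∅
  | (m+1) => X ⟨min m (d-1), by omega⟩

lemma Xe_zero : Xe hd X 0 = ∅ := rfl

lemma Xe_succ (m : ℕ) : Xe hd X (m+1) = X ⟨min m (d-1), by omega⟩ := rfl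

lemma Xe_fin (j : Fin d) : Xe hd X ((j : ℕ) + 1) = X j := by
  rw [Xe_succ]
  congr 1
  refine Fin.ext ?_
  show min (j : ℕ) (d-1) = (j : ℕ)
  have := j.isLt
  omega

include htop in
lemma Xe_succ_top {n : ℕ} (hn : d - 1 ≤ n) : Xe hd X (n+1) = Finset.univ := by
  rw [Xe_succ]
  have h2 : X ⟨min n (d-1), by omega⟩ = X ⟨d-1, Nat.sub_lt hd Nat.one_pos⟩ := by
    congr 1
    refine Fin.ext ?_
    show min n (d-1) = d - 1
    omega
  exact h2.trans htop

include htop in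
lemma Xe_top : Xe hd X d = Finset.univ := by
  have h := Xe_succ_top hd X htop (n := d - 1) le_rfl
  rwa [show d - 1 + 1 = d by omega] at h

include htop in
lemma Xe_stab {n : ℕ} (hn : d ≤ n) : Xe hd X n = Finset.univ := by
  obtain ⟨m, rfl⟩ : ∃ m, n = m + 1 := ⟨n - 1, by omega⟩
  exact Xe_succ_top hd X htop (by omega)

include hmono in
lemma Xe_mono (n : ℕ) : Xe hd X n ⊆ Xe hd X (n+1) := by
  cases n with
  | zero => exact Finset.empty_subset _
  | succ m =>
    rw [Xe_succ, Xe_succ]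
    exact hmono.monotone (Fin.mk_le_mk.2 (by omega))

include hmono in
lemma Xe_subset {m n : ℕ} (h : m ≤ n) : Xe hd X m ⊆ Xe hd X n :=
  monotone_nat_of_le_succ (Xe_mono hd X hmono) h

include hcard in
lemma Xe_card {n : ℕ} (hn : n ≤ d) : (Xe hd X n).card = n := by
  cases n with
  | zero => simp [Xe_zero]
  | succ m =>
    rw [Xe_succ, hcard]
    show min m (d-1) + 1 = m + 1
    omega

include hmono hcard in
lemma Xe_card_sdiff {n : ℕ} (hn : n < d) :
    ((Xe hd X (n+1)) \ (Xe hd X n)).card = 1 := by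
  rw [Finset.card_sdiff_of_subset (Xe_mono hd X hmono n), Xe_card hd X hcard (by omega),
    Xe_card hd X hcard (by omega)]
  omega

noncomputable def idx (i : Fin d) : Fin d :=
  (Finset.univ.filter (fun j => i ∈ X j)).min'
    ⟨⟨d-1, Nat.sub_lt hd Nat.one_pos⟩, by simp [htop]⟩

lemma mem_X_idx (i : Fin d) : i ∈ X (idx hd X htop i) := by
  have := Finset.min'_mem (Finset.univ.filter (fun j => i ∈ X j))
    ⟨⟨d-1, Nat.sub_lt hd Nat.one_pos⟩, by simp [htop]⟩
  simpa [idx] using this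

lemma idx_le {i : Fin d} {j : Fin d} (h : i ∈ X j) : idx hd X htop i ≤ j :=
  Finset.min'_le _ j (by simp [h])

include hmono in
lemma idx_eq_of_new {n : ℕ} (hn : n < d) {i : Fin d}
    (h : i ∈ Xe hd X (n+1) \ Xe hd X n) : ((idx hd X htop i : ℕ)) = n := by
  obtain ⟨h1, h2⟩ := Finset.mem_sdiff.1 h
  have hXn : Xe hd X (n+1) = X ⟨n, hn⟩ := by
    rw [Xe_succ]
    congr 1
    refine Fin.ext ?_
    show min n (d-1) = n
    omega
  rw [hXn] at h1
  have hle : idx hd X htop i ≤ (⟨n, hn⟩ : Fin d) := idx_le hd X htop h1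
  have hlev : ((idx hd X htop i : ℕ)) ≤ n := hle
  rcases eq_or_lt_of_le hlev with heq | hlt
  · exact heq
  · exfalso
    obtain ⟨m, rfl⟩ : ∃ m, n = m + 1 := ⟨n - 1, by omega⟩
    apply h2
    rw [Xe_succ]
    refine hmono.monotone (Fin.le_def.2 ?_) (mem_X_idx hd X htop i)
    show ((idx hd X htop i : ℕ)) ≤ min m (d-1)
    omega

include hmono hcard in
lemma Xe_insert {n : ℕ} (hn : n < d) :
    ∃ a : Fin d, a ∉ Xe hd X n ∧ Xe hd X (n+1) = insert a (Xe hd X n) ∧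
      ((idx hd X htop a : ℕ)) = n := by
  obtain ⟨a, ha⟩ := Finset.card_eq_one.1 (Xe_card_sdiff hd X hmono hcard hn)
  have hamem : a ∈ Xe hd X (n+1) \ Xe hd X n := by rw [ha]; exact Finset.mem_singleton_self a
  obtain ⟨ha1, ha2⟩ := Finset.mem_sdiff.1 hamem
  refine ⟨a, ha2, ?_, idx_eq_of_new hd X hmono htop hn hamem⟩
  ext x
  simp only [Finset.mem_insert]
  constructor
  · intro hx
    by_cases hxn : x ∈ Xe hd X n
    · exact Or.inr hxn
    · left
      have : x ∈ Xe hd X (n+1) \ Xe hd X n := Finset.mem_sdiff.2 ⟨hx, hxn⟩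
      rw [ha] at this
      exact Finset.mem_singleton.1 this
  · rintro (rfl | hx)
    · exact ha1
    · exact Xe_mono hd X hmono n hx

noncomputable def yg (N : ℝ) : Fin d → ℝ :=
  fun i => gN M N (Xe hd X ((idx hd X htop i : ℕ) + 1)) - gN M N (Xe hd X (idx hd X htop i : ℕ))

include hmono hcard in
lemma yg_sum_chain (N : ℝ) : ∀ m, m ≤ d →
    ∑ i ∈ Xe hd X m, yg M hd X htop N i = gN M N (Xe hd X m) - gN M N ∅ := by
  intro m
  induction m with
  | zero => intro _; simp [Xe_zero]
  | succ m ih =>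
    intro hm
    obtain ⟨a, ha1, ha2, ha3⟩ := Xe_insert hd X hmono hcard htop (show m < d by omega)
    rw [ha2, Finset.sum_insert ha1, ih (by omega)]
    have hyga : yg M hd X htop N a = gN M N (Xe hd X (m+1)) - gN M N (Xe hd X m) := by
      unfold yg
      rw [ha3]
    rw [hyga, ha2]
    ring

include hmono hcard in
lemma yg_feasible (N : ℝ) (hN : 0 ≤ N) : ∀ n, ∀ A ⊆ Xe hd X n,
    ∑ i ∈ A, yg M hd X htop N i ≤ gN M N A - gN M N ∅ := by
  intro n
  induction n with
  | zero =>
    intro A hA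
    rw [Finset.subset_empty.1 hA]
    simp
  | succ n ih =>
    by_cases hn : n < d
    · obtain ⟨a, ha1, ha2, ha3⟩ := Xe_insert hd X hmono hcard htop hn
      intro A hA
      rw [ha2] at hA
      by_cases haA : a ∈ A
      · have hsub : A.erase a ⊆ Xe hd X n := by
          intro x hx
          obtain ⟨hxa, hxA⟩ := Finset.mem_erase.1 hx
          rcases Finset.mem_insert.1 (hA hxA) with h | h
          · exact absurd h hxa
          · exact h
        have hIH := ih (A.erase a) hsub
        have hsum : ∑ i ∈ A, yg M hd X htop N i
            = yg M hd X htop N a + ∑ i ∈ A.erase a, yg M hd X htop N i :=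
          (Finset.add_sum_erase A _ haA).symm
        have hyga : yg M hd X htop N a = gN M N (Xe hd X (n+1)) - gN M N (Xe hd X n) := by
          unfold yg
          rw [ha3]
        have hunion : A ∪ Xe hd X n = Xe hd X (n+1) := by
          rw [ha2]
          apply Finset.Subset.antisymm
          · intro x hx
            rcases Finset.mem_union.1 hx with h | h
            · exact hA h
            · exact Finset.mem_insert_of_mem h
          · intro x hx
            rcases Finset.mem_insert.1 hx with rfl | h
            · exact Finset.mem_union_left _ haA
            · exact Finset.mem_union_right _ h
        have hinter : A ∩ Xe hd X n = A.erase a := by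
          ext x
          simp only [Finset.mem_inter, Finset.mem_erase]
          constructor
          · rintro ⟨hxA, hxn⟩
            exact ⟨fun hxa => ha1 (hxa ▸ hxn), hxA⟩
          · rintro ⟨hxa, hxA⟩
            refine ⟨hxA, ?_⟩
            rcases Finset.mem_insert.1 (hA hxA) with h | h
            · exact absurd h hxa
            · exact h
        have hsubm := gN_submodular M hN A (Xe hd X n)
        rw [hunion, hinter] at hsubm
        linarith
      · refine ih A ?_
        intro x hx
        rcases Finset.mem_insert.1 (hA hx) with rfl | h
        · exact absurd hx haA
        · exact h
    · intro A hA
      refine ih A ?_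
      have h2 : Xe hd X n = Finset.univ := Xe_stab hd X htop (by omega)
      rw [h2]
      exact Finset.subset_univ A

include hd hmono hcard htop in
lemma exists_greedy {N : ℝ} (hN : N0 M ≤ N) :
    ∃ y ∈ megaQ M, ∀ j : Fin d, ∑ i ∈ X j, y i = gN M N (X j) := by
  have hN0 : 0 ≤ N := le_trans (N0_pos M).le hN
  have hg0 : gN M N ∅ = 0 := by
    rw [gN_eq_rkR M hN (empty_mem_Lfin M), rkR_empty]
  refine ⟨yg M hd X htop N, ?_, ?_⟩
  · apply mem_megaQ_of
    · have := yg_sum_chain M hd X hmono hcard htop N d le_rfl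
      rw [Xe_top hd X htop, hg0] at this
      rw [this, gN_eq_rkR M hN (univ_mem_Lfin M)]
      ring
    · intro A hA
      have := yg_feasible M hd X hmono hcard htop N hN0 d A
        (by rw [Xe_top hd X htop]; exact Finset.subset_univ A)
      rw [hg0] at this
      have hle : gN M N A ≤ rkR M A := by
        have h := gN_le M (N := N) hA A
        simpa [symmDiff_self] using h
      linarith
  · intro j
    have := yg_sum_chain M hd X hmono hcard htop N ((j : ℕ) + 1) (by have := j.isLt; omega)
    rw [Xe_fin hd X j, hg0] at this
    rw [this]
    ring

noncomputable def aSeq (j : Fin d) (n : ℕ) : ℝ := gN M (N0 M + n) (X j)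

lemma N0_le_add (n : ℕ) : N0 M ≤ N0 M + n := by
  have : (0:ℝ) ≤ n := Nat.cast_nonneg n
  linarith

lemma aSeq_mono (j : Fin d) : Monotone (aSeq M X j) := by
  apply monotone_nat_of_le_succ
  intro n
  apply gN_mono
  push_cast
  linarith

include hd hmono hcard htop in
lemma exists_greedy_n (n : ℕ) :
    ∃ y ∈ megaQ M, ∀ j : Fin d, ∑ i ∈ X j, y i = aSeq M X j n :=
  exists_greedy M hd X hmono hcard htop (N0_le_add M n)

include hd hmono hcard htop in
lemma megaQ_nonempty : (megaQ M).Nonempty := by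
  obtain ⟨y, hy, -⟩ := exists_greedy_n M hd X hmono hcard htop 0
  exact ⟨y, hy⟩

lemma rkSet_ge {y : Fin d → ℝ} (hy : y ∈ megaQ M) (S : Finset (Fin d)) :
    ((∑ i ∈ S, y i : ℝ) : EReal) ≤ rkSet (megaQ M) S :=
  le_iSup₂ (f := fun y (_ : y ∈ megaQ M) => ((∑ i ∈ S, y i : ℝ) : EReal)) y hy

include hd hmono hcard htop in
lemma rkSet_eq_iSup (j : Fin d) :
    rkSet (megaQ M) (X j) = ⨆ n : ℕ, ((aSeq M X j n : ℝ) : EReal) := by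
  apply le_antisymm
  · refine iSup₂_le ?_
    intro y hy
    obtain ⟨n, hn⟩ := exists_nat_ge (∑ i, |y i| - N0 M)
    have hle : ∑ i, |y i| ≤ N0 M + n := by linarith
    have h2 := sum_le_gN M hy (X j) hle
    exact le_trans (EReal.coe_le_coe_iff.2 h2) (le_iSup (fun n => ((aSeq M X j n : ℝ) : EReal)) n)
  · refine iSup_le ?_
    intro n
    obtain ⟨y, hy, hv⟩ := exists_greedy_n M hd X hmono hcard htop n
    rw [← hv j]
    exact rkSet_ge M hy (X j)

lemma aSeq_last {j : Fin d} (hj : X j = Finset.univ) (n : ℕ) :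
    aSeq M X j n = rkR M Finset.univ := by
  unfold aSeq
  rw [hj]
  exact gN_eq_rkR M (N0_le_add M n) (univ_mem_Lfin M)

include hd hmono hcard htop in
lemma rkSet_last {j : Fin d} (hj : X j = Finset.univ) :
    rkSet (megaQ M) (X j) = ((rkR M Finset.univ : ℝ) : EReal) := by
  apply le_antisymm
  · refine iSup₂_le ?_
    intro y hy
    rw [hj, megaQ_sum_univ M hy]
  · obtain ⟨y, hy⟩ := megaQ_nonempty M hd X hmono hcard htop
    have hsum : ∑ i ∈ X j, y i = rkR M Finset.univ := by
      rw [hj]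
      exact megaQ_sum_univ M hy
    have h := rkSet_ge M hy (X j)
    rwa [hsum] at h

lemma rkSet_ne_bot (j : Fin d) (hne : (megaQ M).Nonempty) :
    rkSet (megaQ M) (X j) ≠ ⊥ := by
  obtain ⟨y, hy⟩ := hne
  intro hb
  have := rkSet_ge M hy (X j)
  rw [hb, le_bot_iff] at this
  exact EReal.coe_ne_bot _ this

end Chain

lemma coe_sum_eq {ι : Type*} (s : Finset ι) (f : ι → ℝ) :
    ((∑ i ∈ s, f i : ℝ) : EReal) = ∑ i ∈ s, ((f i : ℝ) : EReal) := by
  induction s using Finset.cons_induction with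
  | empty => simp
  | cons a s ha ih => rw [Finset.sum_cons, Finset.sum_cons, EReal.coe_add, ih]

end SupChainAux

open SupChainAux in
/-- Lemma `lemsupequal`: for a maximal chain `∅ ⊂ X_1 ⊂ ⋯ ⊂ X_d = {1,…,d}` and
coefficients `α` with `α_1,…,α_{d-1} ≥ 0`,
`sup_{y ∈ Q(rk)} ∑_j α_j ∑_{i ∈ X_j} y_i = ∑_j α_j · rk_Π(X_j)` in the extended reals
(where multiplication is `EReal` multiplication, so `0·∞ = 0`). -/
theorem sup_chain_combination (d : ℕ) (hd : 1 ≤ d) (M : Megamatroid d)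
    (X : Fin d → Finset (Fin d)) (hmono : StrictMono X)
    (hcard : ∀ j : Fin d, (X j).card = (j : ℕ) + 1)
    (htop : X ⟨d - 1, by omega⟩ = Finset.univ)
    (α : Fin d → ℝ) (hα : ∀ j : Fin d, (j : ℕ) < d - 1 → 0 ≤ α j) :
    (⨆ y ∈ megaQ M, ((∑ j : Fin d, α j * ∑ i ∈ X j, y i : ℝ) : EReal)) =
      ∑ j : Fin d, (α j : EReal) * rkSet (megaQ M) (X j) := by
  classical
  have hjlast : ∀ j : Fin d, (j : ℕ) = d - 1 → X j = Finset.univ := by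
    intro j hj
    have : j = ⟨d - 1, by omega⟩ := Fin.ext (by simpa using hj)
    rw [this]
    exact htop
  have hne : (megaQ M).Nonempty := megaQ_nonempty M hd X hmono hcard htop
  have hriSup : ∀ j : Fin d,
      rkSet (megaQ M) (X j) = ⨆ n : ℕ, ((aSeq M X j n : ℝ) : EReal) :=
    rkSet_eq_iSup M hd X hmono hcard htop
  -- hub : each greedy value sequence is below the LHS sup
  have hub : ∀ n : ℕ, ((∑ j : Fin d, α j * aSeq M X j n : ℝ) : EReal) ≤
      (⨆ y ∈ megaQ M, ((∑ j : Fin d, α j * ∑ i ∈ X j, y i : ℝ) : EReal)) := by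
    intro n
    obtain ⟨y, hy, hv⟩ := exists_greedy_n M hd X hmono hcard htop n
    have heq : ∑ j : Fin d, α j * aSeq M X j n = ∑ j : Fin d, α j * ∑ i ∈ X j, y i :=
      Finset.sum_congr rfl (fun j _ => by rw [hv j])
    rw [heq]
    exact le_iSup₂ (f := fun y (_ : y ∈ megaQ M) =>
      ((∑ j : Fin d, α j * ∑ i ∈ X j, y i : ℝ) : EReal)) y hy
  apply le_antisymm
  · -- LHS ≤ RHS
    refine iSup₂_le ?_
    intro y hy
    rw [coe_sum_eq]
    refine Finset.sum_le_sum ?_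
    intro j _
    rw [EReal.coe_mul]
    by_cases hj : (j : ℕ) < d - 1
    · refine mul_le_mul_of_nonneg_left (rkSet_ge M hy (X j)) ?_
      exact_mod_cast hα j hj
    · have hj' : (j : ℕ) = d - 1 := by have := j.isLt; omega
      have hXj := hjlast j hj'
      rw [rkSet_last M hd X hmono hcard htop hXj]
      have hsum : ∑ i ∈ X j, y i = rkR M Finset.univ := by
        rw [hXj]; exact megaQ_sum_univ M hy
      rw [hsum]
  · -- RHS ≤ LHS
    by_cases hcaseA : ∃ j : Fin d, (j : ℕ) < d - 1 ∧ α j ≠ 0 ∧ rkSet (megaQ M) (X j) = ⊤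
    · obtain ⟨j0, hj0lt, hj0ne, hj0top⟩ := hcaseA
      have hα0 : 0 < α j0 := lt_of_le_of_ne (hα j0 hj0lt) (Ne.symm hj0ne)
      have hLHStop : (⨆ y ∈ megaQ M,
          ((∑ j : Fin d, α j * ∑ i ∈ X j, y i : ℝ) : EReal)) = ⊤ := by
        rw [EReal.eq_top_iff_forall_lt]
        intro t
        -- S n ≥ S 0 + α j0 * (a j0 n - a j0 0)
        have hSn_ge : ∀ n : ℕ,
            (∑ j : Fin d, α j * aSeq M X j 0) + α j0 * (aSeq M X j0 n - aSeq M X j0 0)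
              ≤ ∑ j : Fin d, α j * aSeq M X j n := by
          intro n
          have hterm : ∀ j : Fin d, j ∈ Finset.univ →
              α j * aSeq M X j 0 + (if j = j0 then α j0 * (aSeq M X j0 n - aSeq M X j0 0) else 0)
                ≤ α j * aSeq M X j n := by
            intro j _
            by_cases hjj : j = j0
            · subst hjj
              simp only [eq_self_iff_true, if_true]
              exact le_of_eq (by ring)
            · rw [if_neg hjj, add_zero]
              by_cases hjlt : (j : ℕ) < d - 1
              · exact mul_le_mul_of_nonneg_left (aSeq_mono M X j (Nat.zero_le n)) (hα j hjlt)
              · have hj' : (j : ℕ) = d - 1 := by have := j.isLt; omega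
                rw [aSeq_last M X (hjlast j hj') 0, aSeq_last M X (hjlast j hj') n]
            
          have := Finset.sum_le_sum hterm
          rw [Finset.sum_add_distrib, Finset.sum_ite_eq' Finset.univ j0
            (fun _ => α j0 * (aSeq M X j0 n - aSeq M X j0 0))] at this
          simpa using this
        have hunb : ∀ c : ℝ, ∃ n : ℕ, c < aSeq M X j0 n := by
          intro c
          by_contra hcon
          push_neg at hcon
          have hle : rkSet (megaQ M) (X j0) ≤ (c : EReal) := by
            rw [hriSup j0]
            exact iSup_le (fun n => EReal.coe_le_coe_iff.2 (hcon n))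
          rw [hj0top] at hle
          exact absurd (lt_of_le_of_lt hle (EReal.coe_lt_top c)) (lt_irrefl _)
        obtain ⟨n, hn⟩ := hunb ((t - ∑ j : Fin d, α j * aSeq M X j 0) / α j0 + aSeq M X j0 0)
        have ht : t < ∑ j : Fin d, α j * aSeq M X j n := by
          have h1 : (t - ∑ j : Fin d, α j * aSeq M X j 0) / α j0
              < aSeq M X j0 n - aSeq M X j0 0 := by linarith
          have h2 := (div_lt_iff₀ hα0).1 h1
          have h3 := hSn_ge n
          nlinarith
        exact lt_of_lt_of_le (EReal.coe_lt_coe_iff.2 ht) (hub n)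
      rw [hLHStop]
      exact le_top
    · push_neg at hcaseA
      have hrreal : ∀ j : Fin d, α j ≠ 0 →
          rkSet (megaQ M) (X j) = (((rkSet (megaQ M) (X j)).toReal : ℝ) : EReal) := by
        intro j hαj
        by_cases hj : (j : ℕ) < d - 1
        · exact (EReal.coe_toReal (hcaseA j hj hαj) (rkSet_ne_bot M X j hne)).symm
        · have hj' : (j : ℕ) = d - 1 := by have := j.isLt; omega
          rw [rkSet_last M hd X hmono hcard htop (hjlast j hj')]
          simp
      have hRHS_eq : ∑ j : Fin d, (α j : EReal) * rkSet (megaQ M) (X j)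
          = ((∑ j : Fin d, α j * (rkSet (megaQ M) (X j)).toReal : ℝ) : EReal) := by
        rw [coe_sum_eq]
        refine Finset.sum_congr rfl ?_
        intro j _
        by_cases hαj : α j = 0
        · rw [hαj]
          simp
        · rw [hrreal j hαj, ← EReal.coe_mul]
          rw [EReal.toReal_coe]
      rw [hRHS_eq]
      set T : ℝ := ∑ j : Fin d, α j * (rkSet (megaQ M) (X j)).toReal with hT
      have happrox : ∀ ε : ℝ, 0 < ε → ∃ n : ℕ, T - ε ≤ ∑ j : Fin d, α j * aSeq M X j n := by
        intro ε hε
        set B : ℝ := ∑ j : Fin d, |α j| with hB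
        have hB0 : 0 ≤ B := Finset.sum_nonneg (fun j _ => abs_nonneg _)
        have hBpos : 0 < B + 1 := by linarith
        set δ : ℝ := ε / (B + 1) with hδ
        have hδpos : 0 < δ := div_pos hε hBpos
        have hper : ∀ j : Fin d, ∃ nj : ℕ,
            α j * (rkSet (megaQ M) (X j)).toReal - |α j| * δ ≤ α j * aSeq M X j nj := by
          intro j
          by_cases hαj : α j = 0
          · exact ⟨0, by rw [hαj]; simp⟩
          · have hsup : (⨆ n : ℕ, ((aSeq M X j n : ℝ) : EReal))
                = (((rkSet (megaQ M) (X j)).toReal : ℝ) : EReal) := by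
              rw [← hriSup j]
              exact hrreal j hαj
            have hex : ∃ n : ℕ, (rkSet (megaQ M) (X j)).toReal - δ < aSeq M X j n := by
              by_contra hcon
              push_neg at hcon
              have hle : (⨆ n : ℕ, ((aSeq M X j n : ℝ) : EReal))
                  ≤ (((rkSet (megaQ M) (X j)).toReal - δ : ℝ) : EReal) :=
                iSup_le (fun n => EReal.coe_le_coe_iff.2 (hcon n))
              rw [hsup] at hle
              have := EReal.coe_le_coe_iff.1 hle
              linarith
            obtain ⟨n, hn⟩ := hex
            refine ⟨n, ?_⟩
            rcases le_or_gt 0 (α j) with hpos | hneg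
            · have h1 : α j * ((rkSet (megaQ M) (X j)).toReal - δ) ≤ α j * aSeq M X j n :=
                mul_le_mul_of_nonneg_left hn.le hpos
              have habs : |α j| = α j := abs_of_nonneg hpos
              rw [habs]
              nlinarith
            · have hj' : (j : ℕ) = d - 1 := by
                by_contra h'
                have hjlt : (j : ℕ) < d - 1 := by have := j.isLt; omega
                exact absurd (hα j hjlt) (not_le.2 hneg)
              have h1 : aSeq M X j n = rkR M Finset.univ := aSeq_last M X (hjlast j hj') n
              have h2 : (rkSet (megaQ M) (X j)).toReal = rkR M Finset.univ := by
                rw [rkSet_last M hd X hmono hcard htop (hjlast j hj')]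
                simp
              rw [h1, h2]
              have : 0 ≤ |α j| * δ := by positivity
              linarith
        choose nj hnj using hper
        set n : ℕ := Finset.univ.sup nj with hn
        refine ⟨n, ?_⟩
        have hstep : ∀ j : Fin d, j ∈ Finset.univ →
            α j * (rkSet (megaQ M) (X j)).toReal - |α j| * δ ≤ α j * aSeq M X j n := by
          intro j _
          have hle : aSeq M X j (nj j) ≤ aSeq M X j n :=
            aSeq_mono M X j (Finset.le_sup (Finset.mem_univ j))
          rcases le_or_gt 0 (α j) with hpos | hneg
          · have := mul_le_mul_of_nonneg_left hle hpos
            linarith [hnj j]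
          · have hj' : (j : ℕ) = d - 1 := by
              by_contra h'
              have hjlt : (j : ℕ) < d - 1 := by have := j.isLt; omega
              exact absurd (hα j hjlt) (not_le.2 hneg)
            have h1 : aSeq M X j (nj j) = rkR M Finset.univ := aSeq_last M X (hjlast j hj') _
            have h2 : aSeq M X j n = rkR M Finset.univ := aSeq_last M X (hjlast j hj') _
            have := hnj j
            rw [h1] at this
            rw [h2]
            linarith
        have hsum := Finset.sum_le_sum hstep
        rw [Finset.sum_sub_distrib] at hsum
        have hBδ : ∑ j : Fin d, |α j| * δ = B * δ := by
          rw [hB, Finset.sum_mul]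
        have hBδle : B * δ ≤ ε := by
          have h1 : B * δ ≤ (B + 1) * δ := mul_le_mul_of_nonneg_right (by linarith) hδpos.le
          have h2 : (B + 1) * δ = ε := by
            rw [hδ]
            field_simp
          linarith
        rw [← hT, hBδ] at hsum
        linarith
      -- conclude
      have hεle : ∀ ε : ℝ, 0 < ε → ((T - ε : ℝ) : EReal) ≤
          (⨆ y ∈ megaQ M, ((∑ j : Fin d, α j * ∑ i ∈ X j, y i : ℝ) : EReal)) := by
        intro ε hε
        obtain ⟨n, hn⟩ := happrox ε hε
        exact le_trans (EReal.coe_le_coe_iff.2 hn) (hub n)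
      by_contra hcon
      push_neg at hcon
      set LHS := ⨆ y ∈ megaQ M, ((∑ j : Fin d, α j * ∑ i ∈ X j, y i : ℝ) : EReal) with hLHS
      have hLne_bot : LHS ≠ ⊥ := by
        intro hb
        have h0 := hub 0
        rw [hb, le_bot_iff] at h0
        exact EReal.coe_ne_bot _ h0
      have hLne_top : LHS ≠ ⊤ := by
        intro ht
        rw [ht] at hcon
        exact absurd hcon (by simp)
      have hcoe : LHS = ((LHS.toReal : ℝ) : EReal) := (EReal.coe_toReal hLne_top hLne_bot).symm
      rw [hcoe] at hcon
      have hlt : LHS.toReal < T := EReal.coe_lt_coe_iff.1 hcon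
      have hε : 0 < (T - LHS.toReal) / 2 := by linarith
      have := hεle _ hε
      rw [hcoe] at this
      have h9 := EReal.coe_le_coe_iff.1 this
      simp only [EReal.toReal_coe] at h9
      linarith
end

section
/- Let rk be a megamatroid on {1,…,d} and let Π = Q(rk). Then the set function rk_Π is submodular: for all subsets A, B of {1,…,d}, rk_Π(A∪B) + rk_Π(A∩B) ≤ rk_Π(A) + rk_Π(B), where the inequality and sums are in the extended reals ℝ ∪ {−∞, +∞}. -/
open scoped BigOperators

set_option linter.unnecessarySeqFocus false
namespace MegaAux

open Finset

variable {d : ℕ} (M : Megamatroid d)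

noncomputable def rz (C : Finset (Fin d)) : ℤ := WithTop.untopD 0 (M.rk C)

lemma rk_eq_rz {C : Finset (Fin d)} (h : M.rk C ≠ ⊤) : M.rk C = (rz M C : WithTop ℤ) := by
  lift M.rk C to ℤ using h with z hz
  simp [rz, ← hz]

lemma memQ_sum_le {y : Fin d → ℝ} (hy : y ∈ megaQ M) {C : Finset (Fin d)} (h : M.rk C ≠ ⊤) :
    ∑ i ∈ C, y i ≤ (rz M C : ℝ) := hy.2 C _ (rk_eq_rz M h)

lemma memQ_sum_univ {y : Fin d → ℝ} (hy : y ∈ megaQ M) :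
    ∑ i ∈ (univ : Finset (Fin d)), y i = (rz M univ : ℝ) :=
  hy.1 _ (rk_eq_rz M M.rk_univ_ne_top)

lemma rz_submod {A B : Finset (Fin d)} (hA : M.rk A ≠ ⊤) (hB : M.rk B ≠ ⊤) :
    M.rk (A ∪ B) ≠ ⊤ ∧ M.rk (A ∩ B) ≠ ⊤ ∧
      rz M (A ∪ B) + rz M (A ∩ B) ≤ rz M A + rz M B := by
  obtain ⟨h1, h2, h3⟩ := M.submodular A B hA hB
  refine ⟨h1, h2, ?_⟩
  rw [rk_eq_rz M h1, rk_eq_rz M h2, rk_eq_rz M hA, rk_eq_rz M hB] at h3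
  exact_mod_cast h3

/-- A set is tight for `v` if its rank is finite and the constraint holds with equality. -/
def IsTight (v : Fin d → ℝ) (C : Finset (Fin d)) : Prop :=
  M.rk C ≠ ⊤ ∧ ∑ i ∈ C, v i = (rz M C : ℝ)

lemma isTight_univ {v : Fin d → ℝ} (hv : v ∈ megaQ M) : IsTight M v univ :=
  ⟨M.rk_univ_ne_top, memQ_sum_univ M hv⟩

lemma isTight_inter {v : Fin d → ℝ} (hv : v ∈ megaQ M) {C C' : Finset (Fin d)}
    (hC : IsTight M v C) (hC' : IsTight M v C') : IsTight M v (C ∩ C') := by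
  obtain ⟨h1, h2, h3⟩ := rz_submod M hC.1 hC'.1
  have key : ∑ i ∈ C ∪ C', v i + ∑ i ∈ C ∩ C', v i = ∑ i ∈ C, v i + ∑ i ∈ C', v i :=
    Finset.sum_union_inter
  have hle1 : ∑ i ∈ C ∪ C', v i ≤ (rz M (C ∪ C') : ℝ) := memQ_sum_le M hv h1
  have hle2 : ∑ i ∈ C ∩ C', v i ≤ (rz M (C ∩ C') : ℝ) := memQ_sum_le M hv h2
  have h3' : (rz M (C ∪ C') : ℝ) + rz M (C ∩ C') ≤ (rz M C : ℝ) + rz M C' := by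
    exact_mod_cast h3
  refine ⟨h2, le_antisymm hle2 ?_⟩
  rw [hC.2, hC'.2] at key
  linarith

open Classical in
open Classical in
/-- The minimal tight set of `v` containing `i`. -/
noncomputable def Tset {v : Fin d → ℝ} (hv : v ∈ megaQ M) (i : Fin d) : Finset (Fin d) :=
  ((univ : Finset (Finset (Fin d))).filter (fun C => IsTight M v C ∧ i ∈ C)).inf'
    ⟨univ, by simp [isTight_univ M hv]⟩ id

lemma isTight_inf' {v : Fin d → ℝ} (hv : v ∈ megaQ M) (s : Finset (Finset (Fin d)))
    (hs : s.Nonempty) (h : ∀ C ∈ s, IsTight M v C) : IsTight M v (s.inf' hs id) := by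
  revert h
  induction hs using Finset.Nonempty.cons_induction with
  | singleton a => intro h; simpa using h a (by simp)
  | cons a s ha hs ih =>
      intro h
      rw [Finset.inf'_cons hs]
      exact isTight_inter M hv (h a (by simp)) (ih fun C hC => h C (by simp [hC]))

open Classical in
lemma mem_Tset_self {v : Fin d → ℝ} (hv : v ∈ megaQ M) (i : Fin d) : i ∈ Tset M hv i := by
  rw [Tset]; refine (Finset.mem_inf' _).mpr ?_
  intro C hC
  simp only [Finset.mem_filter] at hC
  exact hC.2.2

open Classical in
lemma isTight_Tset {v : Fin d → ℝ} (hv : v ∈ megaQ M) (i : Fin d) :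
    IsTight M v (Tset M hv i) := by
  apply isTight_inf' M hv
  intro C hC
  simp only [Finset.mem_filter] at hC
  exact hC.2.1

open Classical in
lemma Tset_subset {v : Fin d → ℝ} (hv : v ∈ megaQ M) {i : Fin d} {C : Finset (Fin d)}
    (hC : IsTight M v C) (hiC : i ∈ C) : Tset M hv i ⊆ C := by
  have : C ∈ (univ : Finset (Finset (Fin d))).filter (fun C => IsTight M v C ∧ i ∈ C) := by
    simp [hC, hiC]
  exact Finset.inf'_le id this

/-- Moving mass `ε` from coordinate `j` to coordinate `i`. -/
def move (v : Fin d → ℝ) (i j : Fin d) (ε : ℝ) : Fin d → ℝ :=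
  fun k => v k + (if k = i then ε else 0) - (if k = j then ε else 0)

lemma sum_move (v : Fin d → ℝ) (i j : Fin d) (ε : ℝ) (C : Finset (Fin d)) :
    ∑ k ∈ C, move v i j ε k =
      ∑ k ∈ C, v k + (if i ∈ C then ε else 0) - (if j ∈ C then ε else 0) := by
  unfold move
  rw [Finset.sum_sub_distrib, Finset.sum_add_distrib]
  congr 1 <;> [congr 1; skip] <;> simp [Finset.sum_ite_eq']

lemma exchange {u v : Fin d → ℝ} (hu : u ∈ megaQ M) (hv : v ∈ megaQ M) {i : Fin d}
    (hi : v i < u i) :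
    ∃ j, j ≠ i ∧ u j < v j ∧ ∃ ε₀ > 0, ∀ ε : ℝ, 0 < ε → ε ≤ ε₀ →
      move v i j ε ∈ megaQ M := by
  classical
  set T := Tset M hv i with hT
  have hTt : IsTight M v T := isTight_Tset M hv i
  have hiT : i ∈ T := mem_Tset_self M hv i
  -- find j ∈ T, j ≠ i, with u j < v j
  have hsum : ∑ k ∈ T, u k ≤ ∑ k ∈ T, v k := by
    calc ∑ k ∈ T, u k ≤ (rz M T : ℝ) := memQ_sum_le M hu hTt.1
    _ = ∑ k ∈ T, v k := hTt.2.symm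
  have hj : ∃ j ∈ T, j ≠ i ∧ u j < v j := by
    by_contra hcon
    push_neg at hcon
    have : ∑ k ∈ T, v k < ∑ k ∈ T, u k := by
      rw [← Finset.sum_erase_add T _ hiT, ← Finset.sum_erase_add T u hiT]
      have h1 : ∑ k ∈ T.erase i, v k ≤ ∑ k ∈ T.erase i, u k := by
        apply Finset.sum_le_sum
        intro k hk
        exact hcon k (Finset.mem_of_mem_erase hk) (Finset.ne_of_mem_erase hk)
      linarith
    exact absurd hsum (not_le_of_gt this)
  obtain ⟨j, hjT, hji, hju⟩ := hj
  -- the key property of j : every tight set containing i contains j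
  have hkey : ∀ C : Finset (Fin d), IsTight M v C → i ∈ C → j ∈ C := fun C hC hiC =>
    Tset_subset M hv hC hiC hjT
  -- define ε₀
  set S : Finset (Finset (Fin d)) :=
    (univ : Finset (Finset (Fin d))).filter (fun C => M.rk C ≠ ⊤ ∧ i ∈ C ∧ j ∉ C) with hS
  have hSlack : ∀ C ∈ S, 0 < (rz M C : ℝ) - ∑ k ∈ C, v k := by
    intro C hC
    simp only [hS, Finset.mem_filter] at hC
    obtain ⟨-, hfin, hiC, hjC⟩ := hC
    have hle : ∑ k ∈ C, v k ≤ (rz M C : ℝ) := memQ_sum_le M hv hfin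
    have hne : ∑ k ∈ C, v k ≠ (rz M C : ℝ) := fun heq => hjC (hkey C ⟨hfin, heq⟩ hiC)
    cases lt_or_eq_of_le hle with
    | inl h => linarith
    | inr h => exact absurd h hne
  refine ⟨j, hji, hju, ?_⟩
  by_cases hSne : S.Nonempty
  · refine ⟨S.inf' hSne (fun C => (rz M C : ℝ) - ∑ k ∈ C, v k), ?_, ?_⟩
    · exact (Finset.lt_inf'_iff hSne).mpr hSlack
    · intro ε hε hε₀
      constructor
      · intro z hz
        rw [sum_move]
        simp only [Finset.mem_univ, if_true]
        rw [hv.1 z hz]; ring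
      · intro C z hz
        have hfin : M.rk C ≠ ⊤ := by rw [hz]; exact WithTop.coe_ne_top
        have hzrz : rz M C = z := by
          have := rk_eq_rz M hfin
          rw [hz] at this
          exact_mod_cast this.symm
        have hvC : ∑ k ∈ C, v k ≤ (z : ℝ) := hv.2 C z hz
        rw [sum_move]
        by_cases hiC : i ∈ C
        · by_cases hjC : j ∈ C
          · simp [hiC, hjC]; linarith
          · have hCS : C ∈ S := by simp [hS, hfin, hiC, hjC]
            have := Finset.inf'_le (fun C => (rz M C : ℝ) - ∑ k ∈ C, v k) hCS
            simp only [hiC, hjC, if_true, if_false]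
            have : ε ≤ (rz M C : ℝ) - ∑ k ∈ C, v k := le_trans hε₀ this
            rw [hzrz] at this
            linarith
        · by_cases hjC : j ∈ C <;> simp [hiC, hjC] <;> linarith
  · refine ⟨1, one_pos, ?_⟩
    intro ε hε hε₀
    constructor
    · intro z hz
      rw [sum_move]
      simp only [Finset.mem_univ, if_true]
      rw [hv.1 z hz]; ring
    · intro C z hz
      have hfin : M.rk C ≠ ⊤ := by rw [hz]; exact WithTop.coe_ne_top
      have hvC : ∑ k ∈ C, v k ≤ (z : ℝ) := hv.2 C z hz
      rw [sum_move]
      by_cases hiC : i ∈ C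
      · by_cases hjC : j ∈ C
        · simp [hiC, hjC]; linarith
        · exact absurd ⟨C, by simp [hS, hfin, hiC, hjC]⟩ hSne
      · by_cases hjC : j ∈ C <;> simp [hiC, hjC] <;> linarith

lemma isClosed_megaQ : IsClosed (megaQ M) := by
  have heq : megaQ M =
      (⋂ (z : ℤ) (_ : M.rk Finset.univ = (z : WithTop ℤ)),
        {y : Fin d → ℝ | ∑ i, y i = (z : ℝ)}) ∩
      ⋂ (A : Finset (Fin d)) (z : ℤ) (_ : M.rk A = (z : WithTop ℤ)),
        {y : Fin d → ℝ | ∑ i ∈ A, y i ≤ (z : ℝ)} := by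
    ext y
    simp only [megaQ, Set.mem_setOf_eq, Set.mem_inter_iff, Set.mem_iInter]
  rw [heq]
  have hsum : ∀ A : Finset (Fin d), Continuous fun y : Fin d → ℝ => ∑ i ∈ A, y i :=
    fun A => continuous_finset_sum A fun i _ => continuous_apply i
  refine IsClosed.inter ?_ ?_
  · exact isClosed_iInter fun z => isClosed_iInter fun _ =>
      isClosed_eq (hsum Finset.univ) continuous_const
  · exact isClosed_iInter fun A => isClosed_iInter fun z => isClosed_iInter fun _ =>
      isClosed_le (hsum A) continuous_const

lemma nested_dominate {C D : Finset (Fin d)} (hCD : C ⊆ D) {y y' : Fin d → ℝ}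
    (hy : y ∈ megaQ M) (hy' : y' ∈ megaQ M) :
    ∃ z ∈ megaQ M, ∑ i ∈ D, y i ≤ ∑ i ∈ D, z i ∧ ∑ i ∈ C, y' i ≤ ∑ i ∈ C, z i := by
  classical
  set l : Fin d → ℝ := fun k => min (y k) (y' k) with hl
  set h : Fin d → ℝ := fun k => max (y k) (y' k) with hh
  set K : Set (Fin d → ℝ) :=
    (Set.univ.pi fun k => Set.Icc (l k) (h k)) ∩
      (megaQ M ∩ {z | ∑ i ∈ D, y i ≤ ∑ i ∈ D, z i}) with hK
  have hsumc : ∀ A : Finset (Fin d), Continuous fun z : Fin d → ℝ => ∑ i ∈ A, z i :=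
    fun A => continuous_finset_sum A fun i _ => continuous_apply i
  have hKcpt : IsCompact K := by
    apply IsCompact.inter_right
    · exact isCompact_univ_pi fun k => isCompact_Icc
    · exact (isClosed_megaQ M).inter (isClosed_le continuous_const (hsumc D))
  have hyK : y ∈ K := by
    refine ⟨?_, hy, show ∑ i ∈ D, y i ≤ ∑ i ∈ D, y i from le_refl _⟩
    intro k _
    exact ⟨min_le_left _ _, le_max_left _ _⟩
  -- maximize φ = ∑_C over K
  obtain ⟨z₁, hz₁K, hz₁max⟩ :=
    hKcpt.exists_isMaxOn ⟨y, hyK⟩ ((hsumc C).continuousOn)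
  set K1 : Set (Fin d → ℝ) := K ∩ {z | ∑ i ∈ C, z i = ∑ i ∈ C, z₁ i} with hK1
  have hK1cpt : IsCompact K1 :=
    hKcpt.inter_right (isClosed_eq (hsumc C) continuous_const)
  have hz₁K1 : z₁ ∈ K1 := ⟨hz₁K, rfl⟩
  -- maximize ψ = ∑_{k ∈ C} min (z k) (y' k) over K1
  have hψc : Continuous fun z : Fin d → ℝ => ∑ k ∈ C, min (z k) (y' k) :=
    continuous_finset_sum C fun k _ => (continuous_apply k).min continuous_const
  obtain ⟨w, hwK1, hwmax⟩ := hK1cpt.exists_isMaxOn ⟨z₁, hz₁K1⟩ hψc.continuousOn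
  obtain ⟨⟨hwbox, hwQ, hwD⟩, hwφ⟩ := hwK1
  -- claim: w works
  refine ⟨w, hwQ, hwD, ?_⟩
  by_contra hlt
  push_neg at hlt
  -- find i ∈ C with w i < y' i
  have hi : ∃ i ∈ C, w i < y' i := by
    by_contra hcon
    push_neg at hcon
    exact absurd (Finset.sum_le_sum hcon) (not_le_of_gt hlt)
  obtain ⟨i, hiC, hiw⟩ := hi
  obtain ⟨j, hji, hjw, ε₀, hε₀, hmove⟩ := exchange M hy' hwQ hiw
  set ε : ℝ := min ε₀ (min (y' i - w i) (w j - y' j)) with hε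
  have hεpos : 0 < ε := by
    apply lt_min hε₀
    apply lt_min <;> linarith
  have hεi : ε ≤ y' i - w i := le_trans (min_le_right _ _) (min_le_left _ _)
  have hεj : ε ≤ w j - y' j := le_trans (min_le_right _ _) (min_le_right _ _)
  set w' : Fin d → ℝ := move w i j ε with hw'
  have hw'Q : w' ∈ megaQ M := hmove ε hεpos (min_le_left _ _)
  have hij : i ≠ j := fun hij => by rw [hij] at hiw; linarith
  -- coordinates of w'
  have hw'i : w' i = w i + ε := by simp [hw', move, hij]
  have hw'j : w' j = w j - ε := by simp [hw', move, hji]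
  have hw'k : ∀ k, k ≠ i → k ≠ j → w' k = w k := by
    intro k hk1 hk2; simp [hw', move, hk1, hk2]
  -- w' stays in the box
  have hw'box : w' ∈ Set.univ.pi fun k => Set.Icc (l k) (h k) := by
    intro k _
    rcases eq_or_ne k i with rfl | hki
    · constructor
      · calc l k ≤ w k := (hwbox k trivial).1
        _ ≤ w' k := by rw [hw'i]; linarith
      · calc w' k = w k + ε := hw'i
        _ ≤ y' k := by linarith
        _ ≤ h k := le_max_right _ _
    · rcases eq_or_ne k j with rfl | hkj
      · constructor
        · calc l k ≤ y' k := min_le_right _ _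
          _ ≤ w' k := by rw [hw'j]; linarith
        · calc w' k = w k - ε := hw'j
          _ ≤ w k := by linarith
          _ ≤ h k := (hwbox k trivial).2
      · rw [hw'k k hki hkj]; exact hwbox k trivial
  -- sums over D and C
  have hiD : i ∈ D := hCD hiC
  have hsD : ∑ k ∈ D, w k ≤ ∑ k ∈ D, w' k := by
    rw [sum_move, if_pos hiD]
    by_cases hjD : j ∈ D <;> simp [hjD] <;> linarith
  have hw'K : w' ∈ K := ⟨hw'box, hw'Q, le_trans hwD hsD⟩
  by_cases hjC : j ∈ C
  · -- φ unchanged; ψ increases: contradiction with hwmax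
    have hφ : ∑ k ∈ C, w' k = ∑ k ∈ C, w k := by
      rw [sum_move, if_pos hiC, if_pos hjC]; ring
    have hwφ' : ∑ k ∈ C, w k = ∑ k ∈ C, z₁ k := hwφ
    have hw'K1 : w' ∈ K1 := ⟨hw'K, show ∑ k ∈ C, w' k = ∑ k ∈ C, z₁ k by rw [hφ, hwφ']⟩
    have hψ : ∑ k ∈ C, min (w' k) (y' k) = (∑ k ∈ C, min (w k) (y' k)) + ε := by
      have hterm : ∀ k ∈ C, min (w' k) (y' k)
          = min (w k) (y' k) + (if k = i then ε else 0) := by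
        intro k _
        rcases eq_or_ne k i with rfl | hki
        · rw [hw'i, if_pos rfl]
          rw [min_eq_left (by linarith), min_eq_left (by linarith)]
        · rw [if_neg hki, add_zero]
          rcases eq_or_ne k j with rfl | hkj
          · rw [hw'j, min_eq_right (by linarith), min_eq_right (by linarith)]
          · rw [hw'k k hki hkj]
      rw [Finset.sum_congr rfl hterm, Finset.sum_add_distrib]
      simp [Finset.sum_ite_eq', hiC]
    have := hwmax hw'K1
    simp only [Set.mem_setOf_eq] at this
    rw [hψ] at this
    linarith
  · -- φ increases: contradiction with hz₁max
    have hφ : ∑ k ∈ C, w' k = ∑ k ∈ C, w k + ε := by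
      rw [sum_move, if_pos hiC, if_neg hjC]; ring
    have hwφ' : ∑ k ∈ C, w k = ∑ k ∈ C, z₁ k := hwφ
    have h1 : ∑ k ∈ C, w' k ≤ ∑ k ∈ C, z₁ k := hz₁max hw'K
    rw [hφ, hwφ'] at h1
    linarith

lemma ereal_biSup_add_biSup_le {α : Type*} {P : Set α} {f g : α → ℝ} {S : EReal}
    (h : ∀ y ∈ P, ∀ y' ∈ P, ((f y : ℝ) : EReal) + ((g y' : ℝ) : EReal) ≤ S) :
    (⨆ y ∈ P, ((f y : ℝ) : EReal)) + (⨆ y ∈ P, ((g y : ℝ) : EReal)) ≤ S := by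
  rcases P.eq_empty_or_nonempty with rfl | ⟨y₀, hy₀⟩
  · simp
  · set a := ⨆ y ∈ P, ((f y : ℝ) : EReal) with ha
    set b := ⨆ y ∈ P, ((g y : ℝ) : EReal) with hb
    -- approximate selection
    have hsel : ∀ (F : α → ℝ), ∀ c : ℝ, (c : EReal) < ⨆ y ∈ P, ((F y : ℝ) : EReal) →
        ∃ y ∈ P, c < F y := by
      intro F c hc
      by_contra hcon
      push_neg at hcon
      have : (⨆ y ∈ P, ((F y : ℝ) : EReal)) ≤ (c : EReal) :=
        iSup₂_le fun y hy => EReal.coe_le_coe_iff.mpr (hcon y hy)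
      exact absurd (lt_of_lt_of_le hc this) (lt_irrefl _)
    have hfy₀ : ((f y₀ : ℝ) : EReal) ≤ a := le_iSup₂ (f := fun y (_ : y ∈ P) => ((f y : ℝ) : EReal)) y₀ hy₀
    have hgy₀ : ((g y₀ : ℝ) : EReal) ≤ b := le_iSup₂ (f := fun y (_ : y ∈ P) => ((g y : ℝ) : EReal)) y₀ hy₀
    have hane : a ≠ ⊥ := fun hbot => by simp [hbot] at hfy₀
    have hbne : b ≠ ⊥ := fun hbot => by simp [hbot] at hgy₀
    -- if S = ⊤ we are done
    rcases eq_or_ne S ⊤ with rfl | hS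
    · exact le_top
    -- S ≠ ⊤; then a ≠ ⊤ and b ≠ ⊤
    have haT : a ≠ ⊤ := by
      intro haT
      -- choose y with f y large
      rcases eq_or_ne S ⊥ with rfl | hSb
      · have := h y₀ hy₀ y₀ hy₀
        simp [← EReal.coe_add] at this
      · obtain ⟨s, hs⟩ : ∃ s : ℝ, S = (s : EReal) := ⟨S.toReal, (EReal.coe_toReal hS hSb).symm⟩
        obtain ⟨y, hy, hylt⟩ := hsel f (s - g y₀ + 1) (by rw [← ha, haT]; exact EReal.coe_lt_top _)
        have := h y hy y₀ hy₀
        rw [hs, ← EReal.coe_add, EReal.coe_le_coe_iff] at this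
        linarith
    have hbT : b ≠ ⊤ := by
      intro hbT
      rcases eq_or_ne S ⊥ with rfl | hSb
      · have := h y₀ hy₀ y₀ hy₀
        simp [← EReal.coe_add] at this
      · obtain ⟨s, hs⟩ : ∃ s : ℝ, S = (s : EReal) := ⟨S.toReal, (EReal.coe_toReal hS hSb).symm⟩
        obtain ⟨y, hy, hylt⟩ := hsel g (s - f y₀ + 1) (by rw [← hb, hbT]; exact EReal.coe_lt_top _)
        have := h y₀ hy₀ y hy
        rw [hs, ← EReal.coe_add, EReal.coe_le_coe_iff] at this
        linarith
    -- now a and b are real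
    obtain ⟨ar, har⟩ : ∃ r : ℝ, a = (r : EReal) := ⟨a.toReal, (EReal.coe_toReal haT hane).symm⟩
    obtain ⟨br, hbr⟩ : ∃ r : ℝ, b = (r : EReal) := ⟨b.toReal, (EReal.coe_toReal hbT hbne).symm⟩
    rcases eq_or_ne S ⊥ with rfl | hSb
    · have := h y₀ hy₀ y₀ hy₀
      simp [← EReal.coe_add] at this
    obtain ⟨s, hs⟩ : ∃ s : ℝ, S = (s : EReal) := ⟨S.toReal, (EReal.coe_toReal hS hSb).symm⟩
    rw [har, hbr, hs, ← EReal.coe_add, EReal.coe_le_coe_iff]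
    have key : ∀ ε : ℝ, 0 < ε → ar + br ≤ s + (ε + ε) := by
      intro ε hε
      obtain ⟨y, hy, hyf⟩ := hsel f (ar - ε) (by rw [← ha, har]; exact_mod_cast (by linarith : ar - ε < ar))
      obtain ⟨y', hy', hyg⟩ := hsel g (br - ε) (by rw [← hb, hbr]; exact_mod_cast (by linarith : br - ε < br))
      have := h y hy y' hy'
      rw [hs, ← EReal.coe_add, EReal.coe_le_coe_iff] at this
      linarith
    by_contra hcon
    push_neg at hcon
    have := key ((ar + br - s) / 3) (by linarith)
    linarith


end MegaAux

/-- The set function `rk_Π` of the base polyhedron of a megamatroid is submodular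
(in the extended reals). -/
theorem rkSet_submodular (d : ℕ) (M : Megamatroid d) (A B : Finset (Fin d)) :
    rkSet (megaQ M) (A ∪ B) + rkSet (megaQ M) (A ∩ B) ≤
      rkSet (megaQ M) A + rkSet (megaQ M) B := by
  classical
  have key : ∀ y ∈ megaQ M, ∀ y' ∈ megaQ M,
      ((∑ i ∈ A ∪ B, y i : ℝ) : EReal) + ((∑ i ∈ A ∩ B, y' i : ℝ) : EReal) ≤
        rkSet (megaQ M) A + rkSet (megaQ M) B := by
    intro y hy y' hy'
    obtain ⟨z, hz, hzD, hzC⟩ :=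
      MegaAux.nested_dominate M (Finset.inter_subset_union) hy hy'
    have hui : ∑ i ∈ A ∪ B, z i + ∑ i ∈ A ∩ B, z i = ∑ i ∈ A, z i + ∑ i ∈ B, z i :=
      Finset.sum_union_inter
    have hr : ∑ i ∈ A ∪ B, y i + ∑ i ∈ A ∩ B, y' i ≤ ∑ i ∈ A, z i + ∑ i ∈ B, z i := by
      linarith
    have hzA : ((∑ i ∈ A, z i : ℝ) : EReal) ≤ rkSet (megaQ M) A :=
      le_iSup₂ (f := fun y (_ : y ∈ megaQ M) => ((∑ i ∈ A, y i : ℝ) : EReal)) z hz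
    have hzB : ((∑ i ∈ B, z i : ℝ) : EReal) ≤ rkSet (megaQ M) B :=
      le_iSup₂ (f := fun y (_ : y ∈ megaQ M) => ((∑ i ∈ B, y i : ℝ) : EReal)) z hz
    calc ((∑ i ∈ A ∪ B, y i : ℝ) : EReal) + ((∑ i ∈ A ∩ B, y' i : ℝ) : EReal)
        = ((∑ i ∈ A ∪ B, y i + ∑ i ∈ A ∩ B, y' i : ℝ) : EReal) := (EReal.coe_add _ _).symm
      _ ≤ ((∑ i ∈ A, z i + ∑ i ∈ B, z i : ℝ) : EReal) := EReal.coe_le_coe_iff.mpr hr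
      _ = ((∑ i ∈ A, z i : ℝ) : EReal) + ((∑ i ∈ B, z i : ℝ) : EReal) := EReal.coe_add _ _
      _ ≤ rkSet (megaQ M) A + rkSet (megaQ M) B := add_le_add hzA hzB
  exact MegaAux.ereal_biSup_add_biSup_le key
end

section
/- Let d ≥ 1 and let rk be a megamatroid on {1,…,d}. Then, as functions ℝ^d → ℤ, [Q(rk)] = Σ_{X̲} (−1)^{d−k} [R_MM(X̲, rk)], where the sum is over all chains X̲ : ∅ ⊂ X_1 ⊂ ⋯ ⊂ X_k = {1,…,d} (of every length k with 1 ≤ k ≤ d), and R_MM(X̲, rk) = {y ∈ ℝ^d : y_1+⋯+y_d = rk({1,…,d}) and Σ_{i∈X_j} y_i ≤ rk(X_j) for every j = 1,…,k with rk(X_j) finite}. -/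
open scoped BigOperators

attribute [local instance] Classical.propDecidable

/-- The cone `R_MM(X̲, rk)` for a chain `X̲` of length `k+1`. -/
def megaRMM {d : ℕ} (M : Megamatroid d) {k : ℕ} (X : Fin (k + 1) → Finset (Fin d)) :
    Set (Fin d → ℝ) :=
  {y | (∀ z : ℤ, M.rk Finset.univ = (z : WithTop ℤ) → ∑ i, y i = (z : ℝ)) ∧
    ∀ j : Fin (k + 1), ∀ z : ℤ, M.rk (X j) = (z : WithTop ℤ) → ∑ i ∈ X j, y i ≤ (z : ℝ)}

namespace ChainKey

variable {d : ℕ} (P : Finset (Fin d) → Prop)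

/-- chains of length m+1 of good sets ending at Y, starting nonempty. -/
noncomputable def cset (m : ℕ) (Y : Finset (Fin d)) :
    Finset (Fin (m + 1) → Finset (Fin d)) :=
  Finset.univ.filter
    (fun X => StrictMono X ∧ X 0 ≠ ∅ ∧ X (Fin.last m) = Y ∧ ∀ j, P (X j))

lemma mem_cset {m : ℕ} {Y : Finset (Fin d)} {X : Fin (m + 1) → Finset (Fin d)} :
    X ∈ cset P m Y ↔ StrictMono X ∧ X 0 ≠ ∅ ∧ X (Fin.last m) = Y ∧ ∀ j, P (X j) := by
  simp [cset]

lemma card_lower {m : ℕ} {Y : Finset (Fin d)} {X : Fin (m + 1) → Finset (Fin d)}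
    (hX : X ∈ cset P m Y) : m + 1 ≤ Y.card := by
  rw [mem_cset] at hX
  obtain ⟨hmono, hne, hlast, -⟩ := hX
  have key : ∀ n : ℕ, ∀ h : n < m + 1, n + 1 ≤ (X ⟨n, h⟩).card := by
    intro n
    induction n with
    | zero =>
      intro h
      have : X ⟨0, h⟩ = X 0 := rfl
      rw [this]
      exact Finset.card_pos.2 (Finset.nonempty_iff_ne_empty.2 hne)
    | succ n ih =>
      intro h
      have h' : n < m + 1 := Nat.lt_of_succ_lt h
      have hlt : X ⟨n, h'⟩ < X ⟨n + 1, h⟩ := hmono (by exact Fin.mk_lt_mk.2 (Nat.lt_succ_self n))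
      have := Finset.card_lt_card hlt
      have := ih h'
      omega
  have := key m (Nat.lt_succ_self m)
  rw [show (⟨m, Nat.lt_succ_self m⟩ : Fin (m+1)) = Fin.last m from rfl, hlast] at this
  exact this

lemma cset_eq_empty {m : ℕ} {Y : Finset (Fin d)} (h : Y.card ≤ m) : cset P m Y = ∅ := by
  rw [Finset.eq_empty_iff_forall_notMem]
  intro X hX
  have := card_lower P hX
  omega

lemma cset_zero_card {Y : Finset (Fin d)} :
    ((cset P 0 Y).card : ℤ) = if P Y ∧ Y ≠ ∅ then 1 else 0 := by
  have : cset P 0 Y = if P Y ∧ Y ≠ ∅ then {fun _ => Y} else ∅ := by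
    ext X
    rw [mem_cset]
    constructor
    · rintro ⟨-, hne, hlast, hall⟩
      have hX : X = fun _ => Y := by
        funext j
        have : j = Fin.last 0 := Fin.ext (by have := j.isLt; omega)
        rw [this, hlast]
      have h0 : X 0 = Y := by rw [hX]
      rw [if_pos ⟨by have := hall 0; rwa [h0] at this, by rwa [h0] at hne⟩]
      simp [hX]
    · intro hX
      by_cases h : P Y ∧ Y ≠ ∅
      · rw [if_pos h, Finset.mem_singleton] at hX
        subst hX
        refine ⟨fun a b hab => absurd (Fin.lt_def.mp hab)
          (by have := a.isLt; have := b.isLt; omega), h.2, rfl, fun _ => h.1⟩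
      · rw [if_neg h] at hX
        exact absurd hX (Finset.notMem_empty _)
  rw [this]
  split_ifs <;> simp

lemma cset_succ_card {m : ℕ} {Y : Finset (Fin d)} :
    ((cset P (m + 1) Y).card : ℤ) =
      if P Y then ∑ Z ∈ Finset.univ.filter (· ⊂ Y), ((cset P m Z).card : ℤ) else 0 := by
  by_cases hPY : P Y
  · rw [if_pos hPY]
    have hcard : (cset P (m + 1) Y).card =
        ∑ Z ∈ Finset.univ.filter (· ⊂ Y),
          ((cset P (m + 1) Y).filter (fun X => X (Fin.castSucc (Fin.last m)) = Z)).card := by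
      apply Finset.card_eq_sum_card_fiberwise
      intro X hX
      rw [Finset.mem_coe, mem_cset] at hX
      obtain ⟨hmono, -, hlast, -⟩ := hX
      simp only [Finset.coe_filter, Set.mem_setOf_eq, Finset.mem_coe, Finset.mem_filter, Finset.mem_univ, true_and]
      calc X (Fin.castSucc (Fin.last m)) < X (Fin.last (m+1)) :=
            hmono (Fin.castSucc_lt_last _)
        _ = Y := hlast
    rw [hcard, Nat.cast_sum]
    apply Finset.sum_congr rfl
    intro Z hZ
    rw [Finset.mem_filter] at hZ
    have hZY : Z ⊂ Y := hZ.2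
    congr 1
    apply Finset.card_bij' (i := fun X _ => X ∘ Fin.castSucc)
      (j := fun X' _ => Fin.snoc X' Y)
    · -- forward membership
      intro X hX
      rw [Finset.mem_filter, mem_cset] at hX
      obtain ⟨⟨hmono, hne, hlast, hall⟩, hfib⟩ := hX
      rw [mem_cset]
      refine ⟨fun a b hab => hmono (Fin.castSucc_lt_castSucc_iff.2 hab), ?_, ?_, fun j => hall _⟩
      · show X (Fin.castSucc 0) ≠ ∅
        rwa [Fin.castSucc_zero]
      · exact hfib
    · -- backward membership
      intro X' hX'
      rw [mem_cset] at hX'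
      obtain ⟨hmono, hne, hlast, hall⟩ := hX'
      rw [Finset.mem_filter, mem_cset]
      refine ⟨⟨?_, ?_, ?_, ?_⟩, ?_⟩
      · rw [Fin.strictMono_iff_lt_succ]
        intro i
        induction i using Fin.lastCases with
        | last =>
          rw [Fin.snoc_castSucc, Fin.succ_last, Fin.snoc_last, hlast]
          exact hZY
        | cast i' =>
          rw [Fin.succ_castSucc, Fin.snoc_castSucc, Fin.snoc_castSucc]
          exact hmono Fin.castSucc_lt_succ
      · intro hcon
        apply hne
        have h0 : Fin.snoc (α := fun _ => Finset (Fin d)) X' Y ((0 : Fin (m+1)).castSucc)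
            = X' 0 := Fin.snoc_castSucc ..
        simp only [Fin.castSucc_zero] at h0
        rwa [h0] at hcon
      · exact Fin.snoc_last _ _
      · intro j
        induction j using Fin.lastCases with
        | last => rw [Fin.snoc_last]; exact hPY
        | cast j' => rw [Fin.snoc_castSucc]; exact hall j'
      · rw [Fin.snoc_castSucc, hlast]
    · -- left inverse
      intro X hX
      rw [Finset.mem_filter, mem_cset] at hX
      obtain ⟨⟨hmono, hne, hlast, hall⟩, -⟩ := hX
      funext j
      induction j using Fin.lastCases with
      | last => rw [Fin.snoc_last, hlast]
      | cast j' => rw [Fin.snoc_castSucc]; rfl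
    · -- right inverse
      intro X' hX'
      funext j
      simp [Function.comp]
  · rw [if_neg hPY]
    have : cset P (m + 1) Y = ∅ := by
      rw [Finset.eq_empty_iff_forall_notMem]
      intro X hX
      rw [mem_cset] at hX
      obtain ⟨-, -, hlast, hall⟩ := hX
      exact hPY (hlast ▸ hall (Fin.last (m + 1)))
    rw [this]
    simp

/-- alternating-sign chain count -/
noncomputable def nu (D : ℕ) (Y : Finset (Fin d)) : ℤ :=
  ∑ m ∈ Finset.range D, (-1) ^ m * ((cset P m Y).card : ℤ)

lemma cset_eq_empty_of_not {m : ℕ} {Y : Finset (Fin d)} (h : ¬ P Y) : cset P m Y = ∅ := by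
  rw [Finset.eq_empty_iff_forall_notMem]
  intro X hX
  rw [mem_cset] at hX
  exact h (hX.2.2.1 ▸ hX.2.2.2 (Fin.last m))

lemma nu_rec (hd : 1 ≤ d) (Y : Finset (Fin d)) :
    nu P d Y = if P Y ∧ Y ≠ ∅ then
      1 - ∑ Z ∈ Finset.univ.filter (· ⊂ Y), nu P d Z else 0 := by
  obtain ⟨e, rfl⟩ : ∃ e, d = e + 1 := ⟨d - 1, by omega⟩
  by_cases hPY : P Y
  · by_cases hYne : Y = ∅
    · rw [if_neg (by simp [hYne])]
      apply Finset.sum_eq_zero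
      intro m _
      rw [cset_eq_empty P (by simp [hYne])]
      simp
    · rw [if_pos ⟨hPY, hYne⟩]
      have hsum : nu P (e + 1) Y
          = (∑ m ∈ Finset.range e, (-1 : ℤ) ^ (m + 1) * ((cset P (m + 1) Y).card : ℤ))
            + (-1 : ℤ) ^ 0 * ((cset P 0 Y).card : ℤ) :=
        Finset.sum_range_succ' _ e
      have h0 : (-1 : ℤ) ^ 0 * ((cset P 0 Y).card : ℤ) = 1 := by
        rw [pow_zero, one_mul, cset_zero_card, if_pos ⟨hPY, hYne⟩]
      have hterm : ∀ m ∈ Finset.range e, (-1 : ℤ) ^ (m + 1) * ((cset P (m + 1) Y).card : ℤ)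
          = -((-1 : ℤ) ^ m * ∑ Z ∈ Finset.univ.filter (· ⊂ Y), ((cset P m Z).card : ℤ)) := by
        intro m _
        rw [cset_succ_card P, if_pos hPY, pow_succ]
        ring
      have hZeq : ∀ Z ∈ Finset.univ.filter (· ⊂ Y),
          (∑ m ∈ Finset.range e, (-1 : ℤ) ^ m * ((cset P m Z).card : ℤ)) = nu P (e + 1) Z := by
        intro Z hZ
        rw [Finset.mem_filter] at hZ
        have hcZ : Z.card ≤ e := by
          have h1 := Finset.card_lt_card hZ.2
          have h2 : Y.card ≤ e + 1 := by simpa using Finset.card_le_univ Y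
          omega
        unfold nu
        rw [Finset.sum_range_succ, cset_eq_empty P hcZ]
        simp
      have hswap : (∑ m ∈ Finset.range e,
            (-1 : ℤ) ^ m * ∑ Z ∈ Finset.univ.filter (· ⊂ Y), ((cset P m Z).card : ℤ))
          = ∑ Z ∈ Finset.univ.filter (· ⊂ Y), nu P (e + 1) Z := by
        simp_rw [Finset.mul_sum]
        rw [Finset.sum_comm]
        exact Finset.sum_congr rfl hZeq
      rw [hsum, h0, Finset.sum_congr rfl hterm, Finset.sum_neg_distrib, hswap]
      ring
  · rw [if_neg (by simp [hPY])]
    apply Finset.sum_eq_zero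
    intro m _
    rw [cset_eq_empty_of_not P hPY]
    simp

lemma neg_pow_pred (c : ℕ) (hc : 1 ≤ c) : -(-1 : ℤ) ^ c = (-1) ^ (c - 1) := by
  obtain ⟨e, rfl⟩ : ∃ e, c = e + 1 := ⟨c - 1, by omega⟩
  simp [pow_succ]

lemma exists_minimal_bad :
    ∀ D : Finset (Fin d), ¬ P D → ∃ E, E ⊆ D ∧ ¬ P E ∧ ∀ W ⊆ E, W ≠ E → P W := by
  intro D
  induction D using Finset.strongInduction with
  | _ D ih =>
    intro hD
    by_cases h : ∀ W ⊆ D, W ≠ D → P W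
    · exact ⟨D, Finset.Subset.refl D, hD, h⟩
    · push_neg at h
      obtain ⟨W, hWD, hne, hbad⟩ := h
      obtain ⟨E, hE1, hE2, hE3⟩ := ih W (Finset.ssubset_iff_subset_ne.mpr ⟨hWD, hne⟩) hbad
      exact ⟨E, hE1.trans hWD, hE2, hE3⟩

lemma union_bad (hsub : ∀ A B : Finset (Fin d), ¬P A → ¬P B → P (A ∩ B) → ¬P (A ∪ B))
    {A B : Finset (Fin d)} (hA : ¬P A) (hB : ¬P B)
    (hBmin : ∀ W ⊆ B, W ≠ B → P W) : ¬P (A ∪ B) := by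
  by_cases hBA : B ⊆ A
  · rwa [Finset.union_eq_left.mpr hBA]
  · apply hsub A B hA hB
    apply hBmin _ Finset.inter_subset_right
    intro h
    exact hBA (Finset.inter_eq_right.mp h)

lemma exists_apex (hP0 : P ∅)
    (hsub : ∀ A B : Finset (Fin d), ¬P A → ¬P B → P (A ∩ B) → ¬P (A ∪ B))
    {Y : Finset (Fin d)} (hY : P Y)
    (hbad : ∃ B, B ⊆ Y ∧ B ≠ ∅ ∧ ¬ P B) :
    ∃ i ∈ Y, ∀ C, C ⊆ Y → i ∉ C → (∀ W, W ⊆ C → W ≠ ∅ → P W) → P (insert i C) := by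
  by_contra hcon
  push_neg at hcon
  have hfun : ∀ i : Fin d, ∃ E : Finset (Fin d), i ∈ Y →
      E ⊆ Y ∧ i ∈ E ∧ ¬ P E ∧ ∀ W ⊆ E, W ≠ E → P W := by
    intro i
    by_cases hi : i ∈ Y
    · obtain ⟨C, hC1, hC2, hC3, hC4⟩ := hcon i hi
      obtain ⟨E, hE1, hE2, hE3⟩ := exists_minimal_bad P (insert i C) hC4
      refine ⟨E, fun _ => ⟨hE1.trans (Finset.insert_subset hi hC1), ?_, hE2, hE3⟩⟩
      by_contra hiE
      have hEC : E ⊆ C := by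
        intro x hx
        rcases Finset.mem_insert.mp (hE1 hx) with h | h
        · exact absurd (h ▸ hx) hiE
        · exact h
      rcases Finset.eq_empty_or_nonempty E with rfl | hEne
      · exact hE2 hP0
      · exact hE2 (hC3 E hEC hEne)
    · exact ⟨∅, fun h => absurd h hi⟩
  choose E hE using hfun
  have hbadsup : ∀ s : Finset (Fin d), s ⊆ Y → s.Nonempty → ¬ P (s.sup E) := by
    intro s
    induction s using Finset.induction_on with
    | empty => intro _ h; exact absurd h (by simp)
    | @insert a s ha ih =>
      intro hsub' _
      have haY : a ∈ Y := hsub' (Finset.mem_insert_self a s)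
      obtain ⟨hEa1, hEa2, hEa3, hEa4⟩ := hE a haY
      rcases Finset.eq_empty_or_nonempty s with rfl | hsne
      · rw [Finset.sup_insert, Finset.sup_empty, sup_bot_eq]
        exact hEa3
      · have hsup := ih (fun x hx => hsub' (Finset.mem_insert_of_mem hx)) hsne
        rw [Finset.sup_insert]
        have hub := union_bad P hsub hsup hEa3 hEa4
        rwa [Finset.union_comm] at hub
  have hYne : Y.Nonempty := by
    obtain ⟨B, hBY, hBne, -⟩ := hbad
    exact Finset.Nonempty.mono hBY (Finset.nonempty_iff_ne_empty.2 hBne)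
  have hsupY : Y.sup E = Y := by
    apply Finset.Subset.antisymm
    · exact Finset.sup_le (fun i hi => (hE i hi).1)
    · intro i hi
      exact Finset.le_sup (f := E) hi ((hE i hi).2.1)
  exact hbadsup Y (Finset.Subset.refl Y) hYne (hsupY.symm ▸ hY)

lemma nu_eq (hd : 1 ≤ d) (hP0 : P ∅)
    (hsub : ∀ A B : Finset (Fin d), ¬P A → ¬P B → P (A ∩ B) → ¬P (A ∪ B)) :
    ∀ Y : Finset (Fin d), Y ≠ ∅ →
      nu P d Y = if (∀ Z ⊆ Y, Z ≠ ∅ → P Z) then (-1 : ℤ) ^ (Y.card - 1) else 0 := by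
  intro Y
  induction Y using Finset.strongInduction with
  | _ Y ih =>
    intro hYne
    rw [nu_rec P hd]
    by_cases hPY : P Y
    swap
    · rw [if_neg (by simp [hPY]), if_neg (fun h => hPY (h Y (Finset.Subset.refl Y) hYne))]
    · rw [if_pos ⟨hPY, hYne⟩]
      have hrw : ∀ Z ∈ Finset.univ.filter (· ⊂ Y), nu P d Z =
          -(if (∀ W ⊆ Z, W ≠ ∅ → P W) then (-1 : ℤ) ^ Z.card else 0)
            + (if Z = ∅ then 1 else 0) := by
        intro Z hZ
        rw [Finset.mem_filter] at hZ
        rcases eq_or_ne Z ∅ with rfl | hZne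
        · rw [if_pos rfl,
            if_pos (fun W hW hne => absurd (Finset.subset_empty.mp hW) hne)]
          have hnu0 : nu P d ∅ = 0 := by
            apply Finset.sum_eq_zero
            intro m _
            rw [cset_eq_empty P (by simp)]
            simp
          rw [hnu0]
          simp
        · rw [ih Z hZ.2 hZne, if_neg hZne, add_zero]
          by_cases hH : ∀ W ⊆ Z, W ≠ ∅ → P W
          · rw [if_pos hH, if_pos hH]
            have hc : 1 ≤ Z.card :=
              Finset.card_pos.mpr (Finset.nonempty_iff_ne_empty.mpr hZne)
            rw [← neg_pow_pred Z.card hc]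
          · rw [if_neg hH, if_neg hH, neg_zero]
      rw [Finset.sum_congr rfl hrw, Finset.sum_add_distrib, Finset.sum_neg_distrib]
      have hempty : (∑ Z ∈ Finset.univ.filter (· ⊂ Y),
          if Z = (∅ : Finset (Fin d)) then (1 : ℤ) else 0) = 1 := by
        rw [Finset.sum_ite_eq' (Finset.univ.filter (· ⊂ Y)) (∅ : Finset (Fin d))
          (fun _ => (1 : ℤ))]
        rw [if_pos]
        simp only [Finset.mem_filter, Finset.mem_univ, true_and]
        exact (Finset.empty_ssubset).mpr (Finset.nonempty_iff_ne_empty.2 hYne)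
      rw [hempty]
      have hgoal : (∑ Z ∈ Finset.univ.filter (· ⊂ Y),
          if (∀ W ⊆ Z, W ≠ ∅ → P W) then (-1 : ℤ) ^ Z.card else 0) =
          if (∀ Z ⊆ Y, Z ≠ ∅ → P Z) then (-1 : ℤ) ^ (Y.card - 1) else 0 := by
        by_cases hall : ∀ Z ⊆ Y, Z ≠ ∅ → Z ≠ Y → P Z
        · -- all proper nonempty subsets good
          have hcond : ∀ Z ⊆ Y, Z ≠ ∅ → P Z := by
            intro Z hZY hZne
            rcases eq_or_ne Z Y with rfl | hZY'
            · exact hPY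
            · exact hall Z hZY hZne hZY'
          rw [if_pos hcond]
          have hterm : ∀ Z ∈ Finset.univ.filter (· ⊂ Y),
              (if (∀ W ⊆ Z, W ≠ ∅ → P W) then (-1 : ℤ) ^ Z.card else 0) =
                (-1 : ℤ) ^ Z.card := by
            intro Z hZ
            rw [Finset.mem_filter] at hZ
            exact if_pos (fun W hW hWne => hcond W (hW.trans hZ.2.subset) hWne)
          rw [Finset.sum_congr rfl hterm]
          have hfp : Finset.univ.filter (· ⊂ Y) = Y.powerset.erase Y := by
            ext Z
            simp only [Finset.mem_filter, Finset.mem_univ, true_and, Finset.mem_erase,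
              Finset.mem_powerset, Finset.ssubset_iff_subset_ne]
            tauto
          rw [hfp]
          have hkey := Finset.sum_erase_add Y.powerset
            (fun Z => (-1 : ℤ) ^ Z.card) (Finset.mem_powerset_self Y)
          have hzero := Finset.sum_powerset_neg_one_pow_card_of_nonempty
            (Finset.nonempty_iff_ne_empty.2 hYne)
          have hc : 1 ≤ Y.card :=
            Finset.card_pos.mpr (Finset.nonempty_iff_ne_empty.mpr hYne)
          have hesum : (∑ Z ∈ Y.powerset.erase Y, (-1 : ℤ) ^ Z.card)
              = -(-1 : ℤ) ^ Y.card := by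
            rw [hzero] at hkey
            linarith
          rw [hesum, neg_pow_pred Y.card hc]
        · -- a bad proper nonempty subset exists
          push_neg at hall
          obtain ⟨B, hBY, hBne, hBneY, hBbad⟩ := hall
          rw [if_neg (fun h => hBbad (h B hBY (Finset.nonempty_iff_ne_empty.mp hBne)))]
          obtain ⟨i, hiY, hapex⟩ := exists_apex P hP0 hsub hPY ⟨B, hBY, Finset.nonempty_iff_ne_empty.mp hBne, hBbad⟩
          rw [← Finset.sum_filter, Finset.filter_filter]
          have hmem : ∀ Z, Z ∈ Finset.univ.filter
              (fun Z => Z ⊂ Y ∧ ∀ W ⊆ Z, W ≠ ∅ → P W) →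
              (if i ∈ Z then Z.erase i else insert i Z) ∈ Finset.univ.filter
              (fun Z => Z ⊂ Y ∧ ∀ W ⊆ Z, W ≠ ∅ → P W) := by
            intro Z hZ
            rw [Finset.mem_filter] at hZ
            obtain ⟨-, hZY, hH⟩ := hZ
            by_cases hiZ : i ∈ Z
            · rw [if_pos hiZ, Finset.mem_filter]
              exact ⟨Finset.mem_univ _, lt_of_le_of_lt (Finset.erase_subset i Z) hZY,
                fun W hW hWne => hH W (hW.trans (Finset.erase_subset i Z)) hWne⟩
            · rw [if_neg hiZ, Finset.mem_filter]
              have hins : ∀ W, W ⊆ insert i Z → W ≠ ∅ → P W := by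
                intro W hW hWne
                by_cases hiW : i ∈ W
                · have hWe : W.erase i ⊆ Z := by
                    intro x hx
                    rcases Finset.mem_insert.mp (hW (Finset.mem_of_mem_erase hx)) with h | h
                    · exact absurd h (Finset.ne_of_mem_erase hx)
                    · exact h
                  have happ := hapex (W.erase i) (hWe.trans hZY.subset)
                    (Finset.notMem_erase i W)
                    (fun V hV hVne => hH V (hV.trans hWe) hVne)
                  rwa [Finset.insert_erase hiW] at happ
                · have hWZ : W ⊆ Z := by
                    intro x hx
                    rcases Finset.mem_insert.mp (hW hx) with h | h
                    · exact absurd (h ▸ hx) hiW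
                    · exact h
                  exact hH W hWZ hWne
              refine ⟨Finset.mem_univ _, ?_, fun W hW hWne => hins W hW hWne⟩
              rw [Finset.ssubset_iff_subset_ne]
              constructor
              · exact Finset.insert_subset hiY hZY.subset
              · intro heq
                exact hBbad (hins B (heq ▸ hBY) (Finset.nonempty_iff_ne_empty.mp hBne))
          have hadd : ∀ Z : Finset (Fin d),
              (-1 : ℤ) ^ Z.card + (-1) ^ ((if i ∈ Z then Z.erase i else insert i Z)).card
                = 0 := by
            intro Z
            by_cases hiZ : i ∈ Z
            · rw [if_pos hiZ, Finset.card_erase_of_mem hiZ]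
              have hc : 1 ≤ Z.card := Finset.card_pos.mpr ⟨i, hiZ⟩
              have hcc : Z.card = (Z.card - 1) + 1 := by omega
              rw [hcc]
              rw [pow_succ]
              have hc2 : Z.card - 1 + 1 - 1 = Z.card - 1 := by omega
              rw [hc2]
              ring
            · rw [if_neg hiZ, Finset.card_insert_of_notMem hiZ, pow_succ]
              ring
          have hne2 : ∀ Z : Finset (Fin d),
              (if i ∈ Z then Z.erase i else insert i Z) ≠ Z := by
            intro Z
            by_cases hiZ : i ∈ Z
            · rw [if_pos hiZ]
              intro heq
              exact (Finset.notMem_erase i Z) (by rw [heq]; exact hiZ)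
            · rw [if_neg hiZ]
              intro heq
              exact hiZ (heq ▸ Finset.mem_insert_self i Z)
          have hinv : ∀ Z : Finset (Fin d),
              (if i ∈ (if i ∈ Z then Z.erase i else insert i Z) then
                  (if i ∈ Z then Z.erase i else insert i Z).erase i
                else insert i (if i ∈ Z then Z.erase i else insert i Z)) = Z := by
            intro Z
            by_cases hiZ : i ∈ Z
            · simp only [if_pos hiZ]
              rw [if_neg (Finset.notMem_erase i Z), Finset.insert_erase hiZ]
            · simp only [if_neg hiZ]
              rw [if_pos (Finset.mem_insert_self i Z), Finset.erase_insert hiZ]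
          exact Finset.sum_involution
            (fun Z _ => if i ∈ Z then Z.erase i else insert i Z)
            (fun Z _ => hadd Z) (fun Z _ _ => hne2 Z)
            (fun Z hZ => hmem Z hZ) (fun Z _ => hinv Z)
      rw [hgoal]
      ring

lemma key (hd : 1 ≤ d) (hP0 : P ∅) (hPu : P Finset.univ)
    (hsub : ∀ A B : Finset (Fin d), ¬P A → ¬P B → P (A ∩ B) → ¬P (A ∪ B)) :
    (∑ k ∈ Finset.range d,
      ∑ X ∈ Finset.univ.filter
          (fun X : Fin (k + 1) → Finset (Fin d) =>
            StrictMono X ∧ X 0 ≠ ∅ ∧ X (Fin.last k) = Finset.univ),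
        ((-1 : ℤ) ^ (d - (k + 1))) * (if (∀ j, P (X j)) then (1 : ℤ) else 0))
      = if (∀ A : Finset (Fin d), P A) then 1 else 0 := by
  have hinner : ∀ k ∈ Finset.range d,
      (∑ X ∈ Finset.univ.filter
          (fun X : Fin (k + 1) → Finset (Fin d) =>
            StrictMono X ∧ X 0 ≠ ∅ ∧ X (Fin.last k) = Finset.univ),
        ((-1 : ℤ) ^ (d - (k + 1))) * (if (∀ j, P (X j)) then (1 : ℤ) else 0))
      = (-1 : ℤ) ^ (d - 1) * ((-1 : ℤ) ^ k * ((cset P k Finset.univ).card : ℤ)) := by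
    intro k hk
    rw [Finset.mem_range] at hk
    rw [← Finset.mul_sum, Finset.sum_boole, Finset.filter_filter]
    have hfeq : (Finset.univ.filter (fun X : Fin (k + 1) → Finset (Fin d) =>
        (StrictMono X ∧ X 0 ≠ ∅ ∧ X (Fin.last k) = Finset.univ) ∧ ∀ j, P (X j)))
        = cset P k Finset.univ := by
      apply Finset.filter_congr
      intro X _
      constructor
      · rintro ⟨⟨h1, h2, h3⟩, h4⟩; exact ⟨h1, h2, h3, h4⟩
      · rintro ⟨h1, h2, h3, h4⟩; exact ⟨⟨h1, h2, h3⟩, h4⟩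
    rw [hfeq]
    have h1 : d - 1 = (d - (k + 1)) + k := by omega
    rw [h1, pow_add, mul_assoc, ← mul_assoc ((-1 : ℤ) ^ k) ((-1 : ℤ) ^ k), ← pow_add,
      Even.neg_one_pow ⟨k, rfl⟩, one_mul]
  rw [Finset.sum_congr rfl hinner, ← Finset.mul_sum]
  have hnonempty : (Finset.univ : Finset (Fin d)) ≠ ∅ := by
    have : (0 : ℕ) < d := hd
    have hne : Nonempty (Fin d) := ⟨⟨0, this⟩⟩
    exact Finset.nonempty_iff_ne_empty.mp Finset.univ_nonempty
  have hnu := nu_eq P hd hP0 hsub Finset.univ hnonempty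
  have hnu' : (∑ k ∈ Finset.range d, (-1 : ℤ) ^ k * ((cset P k Finset.univ).card : ℤ))
      = nu P d Finset.univ := rfl
  rw [hnu', hnu]
  have hcard : (Finset.univ : Finset (Fin d)).card = d := by
    rw [Finset.card_univ, Fintype.card_fin]
  have hcond : (∀ Z ⊆ (Finset.univ : Finset (Fin d)), Z ≠ ∅ → P Z)
      ↔ (∀ A : Finset (Fin d), P A) := by
    constructor
    · intro h A
      rcases eq_or_ne A ∅ with rfl | hne
      · exact hP0
      · exact h A (Finset.subset_univ A) hne
    · intro h Z _ _
      exact h Z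
  rw [hcard]
  by_cases hc : ∀ A : Finset (Fin d), P A
  · rw [if_pos (hcond.mpr hc), if_pos hc, ← pow_add]
    exact Even.neg_one_pow ⟨d - 1, rfl⟩
  · rw [if_neg (fun h => hc (hcond.mp h)), if_neg hc, mul_zero]

end ChainKey


/-- Theorem `theo1`: `[Q(rk)] = ∑_{X̲} (−1)^{d−ℓ(X̲)} [R_MM(X̲, rk)]`, summed over all
chains `∅ ⊂ X_1 ⊂ ⋯ ⊂ X_{k+1} = {1,…,d}` of every length `k+1` with `1 ≤ k+1 ≤ d`. -/
theorem indicator_Q_eq_sum_chains (d : ℕ) (hd : 1 ≤ d) (M : Megamatroid d) :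
    Set.indicator (megaQ M) (fun _ => (1 : ℤ)) =
      ∑ k ∈ Finset.range d,
        ∑ X ∈ Finset.univ.filter
            (fun X : Fin (k + 1) → Finset (Fin d) =>
              StrictMono X ∧ X 0 ≠ ∅ ∧ X (Fin.last k) = Finset.univ),
          ((-1 : ℤ) ^ (d - (k + 1))) • Set.indicator (megaRMM M X) (fun _ => (1 : ℤ)) := by
  funext y
  obtain ⟨z0, hz0⟩ := WithTop.ne_top_iff_exists.mp M.rk_univ_ne_top
  simp only [Finset.sum_apply, Pi.smul_apply, smul_eq_mul, Set.indicator_apply]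
  by_cases hE : ∑ i, y i = (z0 : ℝ)
  · -- reduce to the combinatorial key lemma
    set P : Finset (Fin d) → Prop :=
      fun A => ∀ z : ℤ, M.rk A = (z : WithTop ℤ) → ∑ i ∈ A, y i ≤ (z : ℝ) with hP
    have hfirst : ∀ z : ℤ, M.rk Finset.univ = (z : WithTop ℤ) → ∑ i, y i = (z : ℝ) := by
      intro z hz
      have : z = z0 := by
        rw [hz] at hz0
        exact_mod_cast hz0.symm
      rw [this]
      exact hE
    have hQ : (y ∈ megaQ M) ↔ ∀ A, P A := by
      constructor
      · exact fun h => h.2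
      · exact fun h => ⟨hfirst, h⟩
    have hR : ∀ (k : ℕ) (X : Fin (k + 1) → Finset (Fin d)),
        (y ∈ megaRMM M X) ↔ ∀ j, P (X j) := by
      intro k X
      constructor
      · exact fun h => h.2
      · exact fun h => ⟨hfirst, h⟩
    have hP0 : P ∅ := by
      intro z hz
      rw [M.rk_empty] at hz
      have : z = 0 := by exact_mod_cast hz.symm
      subst this
      simp
    have hPu : P Finset.univ := by
      intro z hz
      exact le_of_eq (hfirst z hz)
    have hsub : ∀ A B : Finset (Fin d), ¬P A → ¬P B → P (A ∩ B) → ¬P (A ∪ B) := by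
      intro A B hA hB hAB
      simp only [hP] at hA hB
      push_neg at hA hB
      obtain ⟨a, ha, hlta⟩ := hA
      obtain ⟨b, hb, hltb⟩ := hB
      have hAne : M.rk A ≠ ⊤ := by rw [ha]; exact WithTop.coe_ne_top
      have hBne : M.rk B ≠ ⊤ := by rw [hb]; exact WithTop.coe_ne_top
      obtain ⟨hu, hv, hle⟩ := M.submodular A B hAne hBne
      obtain ⟨u, hu'⟩ := WithTop.ne_top_iff_exists.mp hu
      obtain ⟨v, hv'⟩ := WithTop.ne_top_iff_exists.mp hv
      have hvle : ∑ i ∈ A ∩ B, y i ≤ (v : ℝ) := hAB v hv'.symm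
      have hle' : u + v ≤ a + b := by
        rw [← hu', ← hv', ha, hb, ← WithTop.coe_add, ← WithTop.coe_add,
          WithTop.coe_le_coe] at hle
        exact hle
      intro hPun
      have husum : ∑ i ∈ A ∪ B, y i ≤ (u : ℝ) := hPun u hu'.symm
      have hmod : ∑ i ∈ A ∪ B, y i + ∑ i ∈ A ∩ B, y i = ∑ i ∈ A, y i + ∑ i ∈ B, y i :=
        Finset.sum_union_inter
      have hcast : (u : ℝ) + (v : ℝ) ≤ (a : ℝ) + (b : ℝ) := by
        have h3 : ((u + v : ℤ) : ℝ) ≤ ((a + b : ℤ) : ℝ) := Int.cast_le.mpr hle'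
        push_cast at h3
        linarith
      linarith
    simp only [hQ, hR]
    exact (ChainKey.key P hd hP0 hPu hsub).symm
  · have hQ : y ∉ megaQ M := fun h => hE (h.1 z0 hz0.symm)
    have hR : ∀ (k : ℕ) (X : Fin (k + 1) → Finset (Fin d)), y ∉ megaRMM M X :=
      fun k X h => hE (h.1 z0 hz0.symm)
    rw [if_neg hQ]
    symm
    apply Finset.sum_eq_zero
    intro k _
    apply Finset.sum_eq_zero
    intro X _
    rw [if_neg (hR k X), mul_zero]
end

section
/- Let rk_1,…,rk_n be megamatroids on {1,…,d}, all of the same rank r (i.e. rk_m({1,…,d}) = r for all m), and let a_1,…,a_n be integers such that Σ_{m=1}^n a_m [Q(rk_m)] = 0 as a function ℝ^d → ℤ. Then for every chain X̲ of length k in {1,…,d} and every integer vector r̲ = (r_1,…,r_k) with r_k = r, one has Σ_{m=1}^n a_m s_{X̲,r̲}(rk_m) = 0. -/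
open scoped BigOperators

/-- The indicator function `[Π] : ℝ^d → ℤ` of a subset `Π ⊆ ℝ^d`. -/
noncomputable def indFn {d : ℕ} (P : Set (Fin d → ℝ)) : (Fin d → ℝ) → ℤ :=
  P.indicator fun _ => 1

section Aux

open Finset

/-- Greedy construction for an everywhere-finite submodular function: a vector whose partial
sums satisfy all constraints and are tight along a given monotone chain. -/
theorem mega_greedy (d : ℕ) (g : Finset (Fin d) → ℤ) (hg0 : g ∅ = 0)
    (hsub : ∀ A B, g (A ∪ B) + g (A ∩ B) ≤ g A + g B)
    (X : ℕ → Finset (Fin d)) (hmono : Monotone X)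
    (htop : ∀ B : Finset (Fin d), ∃ j, B ⊆ X j) :
    ∀ B : Finset (Fin d), ∃ y : Fin d → ℤ, (∀ t, t ∉ B → y t = 0) ∧
      (∀ A ⊆ B, ∑ i ∈ A, y i ≤ g A) ∧ (∀ j, ∑ i ∈ X j ∩ B, y i = g (X j ∩ B)) := by
  intro B
  induction B using Finset.strongInduction with
  | _ B ih =>
  rcases B.eq_empty_or_nonempty with rfl | hne
  · refine ⟨0, fun t _ => rfl, ?_, ?_⟩
    · intro A hA
      simp [Finset.subset_empty.mp hA, hg0]
    · intro j; simp [hg0]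
  · have hex : ∃ j, B ⊆ X j := htop B
    have hchoice : ∃ i ∈ B, ∀ j, i ∈ X j → B ⊆ X j := by
      rcases h0 : Nat.find hex with _ | m
      · obtain ⟨i, hi⟩ := hne
        have hB0 : B ⊆ X 0 := h0 ▸ Nat.find_spec hex
        exact ⟨i, hi, fun j _ => hB0.trans (hmono (Nat.zero_le j))⟩
      · have hm : ¬ B ⊆ X m := Nat.find_min hex (by omega)
        obtain ⟨i, hiB, hiXm⟩ := Finset.not_subset.mp hm
        refine ⟨i, hiB, fun j hij => ?_⟩
        have hmj : m < j := by
          by_contra h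
          exact hiXm (hmono (by omega : j ≤ m) hij)
        have : B ⊆ X (m+1) := h0 ▸ Nat.find_spec hex
        exact this.trans (hmono (by omega))
    obtain ⟨i, hiB, hgood⟩ := hchoice
    set B' := B.erase i with hB'
    obtain ⟨y', hsupp, hle, htight⟩ := ih B' (Finset.erase_ssubset hiB)
    set c := g B - g B' with hc
    refine ⟨fun t => y' t + if t = i then c else 0, ?_, ?_, ?_⟩
    · intro t ht
      have hti : t ≠ i := fun h => ht (h ▸ hiB)
      have : t ∉ B' := fun h => ht (Finset.erase_subset _ _ h)
      simp [hsupp t this, hti]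
    · intro A hA
      have hsum : ∀ A : Finset (Fin d), ∑ t ∈ A, (y' t + if t = i then c else 0)
          = (∑ t ∈ A, y' t) + if i ∈ A then c else 0 := by
        intro A
        rw [Finset.sum_add_distrib]
        congr 1
        simp [Finset.sum_ite_eq' A i (fun _ => c)]
      by_cases hiA : i ∈ A
      · have hAe : A.erase i ⊆ B' := Finset.erase_subset_erase _ hA
        have hyi : y' i = 0 := hsupp i (Finset.notMem_erase i B)
        have h1 : ∑ t ∈ A, y' t = ∑ t ∈ A.erase i, y' t := by
          rw [← Finset.add_sum_erase _ _ hiA, hyi, zero_add]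
        have h2 : ∑ t ∈ A.erase i, y' t ≤ g (A.erase i) := hle _ hAe
        have hsub' := hsub A B'
        have hu : A ∪ B' = B := by
          apply Finset.Subset.antisymm
          · exact Finset.union_subset hA (Finset.erase_subset _ _)
          · intro t htB
            by_cases hti : t = i
            · exact Finset.mem_union_left _ (hti ▸ hiA)
            · exact Finset.mem_union_right _ (Finset.mem_erase.mpr ⟨hti, htB⟩)
        have hi' : A ∩ B' = A.erase i := by
          ext t
          simp only [Finset.mem_inter, Finset.mem_erase, hB']
          constructor
          · rintro ⟨h1, h2, _⟩; exact ⟨h2, h1⟩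
          · rintro ⟨h1, h2⟩; exact ⟨h2, h1, hA h2⟩
        rw [hu, hi'] at hsub'
        rw [hsum, if_pos hiA, h1]
        omega
      · have hAB' : A ⊆ B' := fun t ht => Finset.mem_erase.mpr ⟨fun h => hiA (h ▸ ht), hA ht⟩
        rw [hsum, if_neg hiA, add_zero]
        exact hle _ hAB'
    · intro j
      have hsum : ∀ A : Finset (Fin d), ∑ t ∈ A, (y' t + if t = i then c else 0)
          = (∑ t ∈ A, y' t) + if i ∈ A then c else 0 := by
        intro A
        rw [Finset.sum_add_distrib]
        congr 1
        simp [Finset.sum_ite_eq' A i (fun _ => c)]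
      by_cases hij : i ∈ X j
      · have hBX : B ⊆ X j := hgood j hij
        have hXB : X j ∩ B = B := Finset.inter_eq_right.mpr hBX
        have hXB' : X j ∩ B' = B' := Finset.inter_eq_right.mpr ((Finset.erase_subset _ _).trans hBX)
        have hyi : y' i = 0 := hsupp i (Finset.notMem_erase i B)
        have h1 : ∑ t ∈ B, y' t = ∑ t ∈ B', y' t := by
          rw [← Finset.add_sum_erase _ _ hiB, hyi, zero_add]
        have ht' := htight j
        rw [hXB'] at ht'
        rw [hXB, hsum, if_pos hiB, h1, ht']
        omega
      · have hXB : X j ∩ B = X j ∩ B' := by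
          ext t
          simp only [Finset.mem_inter, hB', Finset.mem_erase]
          constructor
          · rintro ⟨h1, h2⟩; exact ⟨h1, fun h => hij (h ▸ h1), h2⟩
          · rintro ⟨h1, _, h2⟩; exact ⟨h1, h2⟩
        have hiC : i ∉ X j ∩ B := fun h => hij (Finset.mem_inter.mp h).1
        rw [hXB] at hiC ⊢
        rw [hsum, if_neg hiC]
        rw [add_zero]
        exact htight j ▸ rfl

/-- The base polyhedron of a megamatroid contains points realizing arbitrarily prescribed
lower bounds along a chain, as long as the bounds are at most the ranks of the chain sets. -/
theorem mega_exists_point (d k : ℕ) (M : Megamatroid d) (X : Fin (k+1) → Finset (Fin d))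
    (hX : Monotone X) (hXlast : X (Fin.last k) = Finset.univ) (ρ : Fin (k+1) → ℤ)
    (hρ : ∀ j, (ρ j : WithTop ℤ) ≤ M.rk (X j)) :
    ∃ y : Fin d → ℝ, y ∈ megaQ M ∧ ∀ j, (ρ j : ℝ) ≤ ∑ i ∈ X j, y i := by
  classical
  set F : Finset (Finset (Fin d)) := Finset.univ.filter (fun B => M.rk B ≠ ⊤) with hF
  have hmemF : ∀ B, B ∈ F ↔ M.rk B ≠ ⊤ := by
    intro B; simp [hF]
  have hFne : F.Nonempty := ⟨Finset.univ, (hmemF _).mpr M.rk_univ_ne_top⟩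
  set val : Finset (Fin d) → ℤ := fun B => (M.rk B).untopD 0 with hvaldef
  have hval : ∀ B, M.rk B ≠ ⊤ → M.rk B = ((val B : ℤ) : WithTop ℤ) := by
    intro B h
    rcases WithTop.ne_top_iff_exists.mp h with ⟨z, hz⟩
    rw [← hz]
    simp [hvaldef, ← hz]
  set R : ℤ := F.sup' hFne (fun B => |val B|) with hR
  have hRb : ∀ B ∈ F, |val B| ≤ R := by
    intro B hB; exact Finset.le_sup' (fun B => |val B|) hB
  set Rρ : ℤ := Finset.univ.sup' ⟨Fin.last k, Finset.mem_univ _⟩ (fun j => |ρ j|) with hRρ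
  have hRρb : ∀ j, |ρ j| ≤ Rρ := by
    intro j; exact Finset.le_sup' (fun j => |ρ j|) (Finset.mem_univ j)
  have hRnn : 0 ≤ R := le_trans (abs_nonneg _) (hRb _ hFne.choose_spec)
  have hRρnn : 0 ≤ Rρ := le_trans (abs_nonneg _) (hRρb (Fin.last k))
  set N : ℤ := 2 * R + Rρ + 1 with hN
  have hNpos : 0 < N := by omega
  set cst : Finset (Fin d) → Finset (Fin d) → ℤ :=
    fun A B => ((A \ B).card : ℤ) + ((B \ A).card : ℤ) with hcst
  have hcst_nn : ∀ A B, 0 ≤ cst A B := by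
    intro A B; simp only [hcst]; positivity
  have hcst_one : ∀ A B, A ≠ B → 1 ≤ cst A B := by
    intro A B hne
    by_contra h
    push_neg at h
    have h1 : (A \ B).card = 0 ∧ (B \ A).card = 0 := by
      simp only [hcst] at h; constructor <;> omega
    have hAB : A ⊆ B := by
      intro t ht
      by_contra htB
      exact absurd (Finset.card_eq_zero.mp h1.1)
        (Finset.ne_empty_of_mem (Finset.mem_sdiff.mpr ⟨ht, htB⟩))
    have hBA : B ⊆ A := by
      intro t ht
      by_contra htA
      exact absurd (Finset.card_eq_zero.mp h1.2)
        (Finset.ne_empty_of_mem (Finset.mem_sdiff.mpr ⟨ht, htA⟩))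
    exact hne (Finset.Subset.antisymm hAB hBA)
  set ghat : Finset (Fin d) → ℤ := fun A => F.inf' hFne (fun B => val B + N * cst A B) with hghat
  have hghatF : ∀ A ∈ F, ghat A = val A := by
    intro A hA
    apply le_antisymm
    · have h0 : cst A A = 0 := by simp [hcst]
      have h1 : ghat A ≤ val A + N * cst A A := Finset.inf'_le (fun B => val B + N * cst A B) hA
      rw [h0, mul_zero, add_zero] at h1
      exact h1
    · rw [hghat, Finset.le_inf'_iff]
      intro B hB
      by_cases hAB : A = B
      · subst hAB; simp [hcst]
      · have h1 : 1 ≤ cst A B := hcst_one A B hAB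
        have h2 : |val B| ≤ R := hRb B hB
        have h3 : |val A| ≤ R := hRb A hA
        have h4 : N ≤ N * cst A B := le_mul_of_one_le_right (le_of_lt hNpos) h1
        rw [abs_le] at h2 h3
        omega
  have hghat_sub : ∀ A₁ A₂, ghat (A₁ ∪ A₂) + ghat (A₁ ∩ A₂) ≤ ghat A₁ + ghat A₂ := by
    intro A₁ A₂
    obtain ⟨B₁, hB₁, e₁⟩ := Finset.exists_mem_eq_inf' hFne (fun B => val B + N * cst A₁ B)
    obtain ⟨B₂, hB₂, e₂⟩ := Finset.exists_mem_eq_inf' hFne (fun B => val B + N * cst A₂ B)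
    have hsubm := M.submodular B₁ B₂ ((hmemF _).mp hB₁) ((hmemF _).mp hB₂)
    have hUF : B₁ ∪ B₂ ∈ F := (hmemF _).mpr hsubm.1
    have hIF : B₁ ∩ B₂ ∈ F := (hmemF _).mpr hsubm.2.1
    have hvalsub : val (B₁ ∪ B₂) + val (B₁ ∩ B₂) ≤ val B₁ + val B₂ := by
      have h := hsubm.2.2
      rw [hval _ hsubm.1, hval _ hsubm.2.1, hval _ ((hmemF _).mp hB₁),
        hval _ ((hmemF _).mp hB₂)] at h
      rw [← WithTop.coe_add, ← WithTop.coe_add, WithTop.coe_le_coe] at h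
      exact h
    have hcard : cst (A₁ ∪ A₂) (B₁ ∪ B₂) + cst (A₁ ∩ A₂) (B₁ ∩ B₂) ≤ cst A₁ B₁ + cst A₂ B₂ := by
      have cardsum : ∀ S : Finset (Fin d), (S.card : ℤ) = ∑ e : Fin d, (if e ∈ S then (1:ℤ) else 0) := by
        intro S
        rw [Finset.sum_ite_mem, Finset.univ_inter, Finset.sum_const, nsmul_eq_mul, mul_one]
      simp only [hcst, cardsum, ← Finset.sum_add_distrib]
      apply Finset.sum_le_sum
      intro e _
      by_cases h1 : e ∈ A₁ <;> by_cases h2 : e ∈ A₂ <;> by_cases h3 : e ∈ B₁ <;>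
        by_cases h4 : e ∈ B₂ <;>
        simp [Finset.mem_sdiff, Finset.mem_union, Finset.mem_inter, h1, h2, h3, h4]
    have l1 : ghat (A₁ ∪ A₂) ≤ val (B₁ ∪ B₂) + N * cst (A₁ ∪ A₂) (B₁ ∪ B₂) :=
      Finset.inf'_le _ hUF
    have l2 : ghat (A₁ ∩ A₂) ≤ val (B₁ ∩ B₂) + N * cst (A₁ ∩ A₂) (B₁ ∩ B₂) :=
      Finset.inf'_le _ hIF
    have l3 : N * (cst (A₁ ∪ A₂) (B₁ ∪ B₂) + cst (A₁ ∩ A₂) (B₁ ∩ B₂))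
        ≤ N * (cst A₁ B₁ + cst A₂ B₂) :=
      mul_le_mul_of_nonneg_left hcard (le_of_lt hNpos)
    have e₁' : ghat A₁ = val B₁ + N * cst A₁ B₁ := e₁
    have e₂' : ghat A₂ = val B₂ + N * cst A₂ B₂ := e₂
    nlinarith [l1, l2, l3, hvalsub, e₁', e₂']
  have hemptyF : (∅ : Finset (Fin d)) ∈ F := by
    rw [hmemF, M.rk_empty]; exact fun h => by simp at h
  have hval_empty : val ∅ = 0 := by
    simp [hvaldef, M.rk_empty]
  have hghat0 : ghat ∅ = 0 := by rw [hghatF _ hemptyF, hval_empty]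
  have hghatX : ∀ j, ρ j ≤ ghat (X j) := by
    intro j
    by_cases hXj : M.rk (X j) = ⊤
    · rw [hghat, Finset.le_inf'_iff]
      intro B hB
      have hne : X j ≠ B := fun h => ((hmemF B).mp hB) (h ▸ hXj)
      have h1 : 1 ≤ cst (X j) B := hcst_one _ _ hne
      have h2 : |val B| ≤ R := hRb B hB
      have h4 : N ≤ N * cst (X j) B := le_mul_of_one_le_right (le_of_lt hNpos) h1
      have h5 : |ρ j| ≤ Rρ := hRρb j
      rw [abs_le] at h2 h5
      omega
    · have hXF : X j ∈ F := (hmemF _).mpr hXj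
      rw [hghatF _ hXF]
      have := hρ j
      rw [hval _ hXj, WithTop.coe_le_coe] at this
      exact this
  set X' : ℕ → Finset (Fin d) := fun j => X ⟨min j k, by omega⟩ with hX'
  have hX'mono : Monotone X' := by
    intro j j' hjj
    exact hX (by simp only [Fin.mk_le_mk]; omega)
  have hX'top : ∀ B : Finset (Fin d), ∃ j, B ⊆ X' j := by
    intro B
    refine ⟨k, ?_⟩
    have : X' k = X (Fin.last k) := by
      rw [hX']
      exact congrArg X (Fin.ext (show min k k = k from Nat.min_self k))
    rw [this, hXlast]
    exact Finset.subset_univ B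
  obtain ⟨y, hysupp, hyle, hytight⟩ :=
    mega_greedy d ghat hghat0 hghat_sub X' hX'mono hX'top Finset.univ
  have hXj_eq : ∀ j : Fin (k+1), X' j.val = X j := by
    intro j
    rw [hX']
    exact congrArg X (Fin.ext (show min j.val k = j.val from Nat.min_eq_left (Nat.lt_succ_iff.mp j.isLt)))
  have hytightX : ∀ j : Fin (k+1), ∑ i ∈ X j, y i = ghat (X j) := by
    intro j
    have := hytight j.val
    rw [Finset.inter_univ, hXj_eq j] at this
    exact this
  refine ⟨fun i => (y i : ℝ), ⟨?_, ?_⟩, ?_⟩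
  · intro z hz
    have h1 : ∑ i ∈ Finset.univ, y i = ghat Finset.univ := by
      have := hytightX (Fin.last k)
      rw [hXlast] at this
      exact this
    have h2 : ghat Finset.univ = val Finset.univ := hghatF _ ((hmemF _).mpr M.rk_univ_ne_top)
    have h3 : z = val Finset.univ := by
      have := hval _ M.rk_univ_ne_top
      rw [hz] at this
      exact_mod_cast this
    calc ∑ i, (y i : ℝ) = ((∑ i, y i : ℤ) : ℝ) := by push_cast; ring
    _ = (z : ℝ) := by rw [h1, h2, ← h3]
  · intro A z hz
    have hAtop : M.rk A ≠ ⊤ := fun h => by rw [h] at hz; exact (WithTop.top_ne_coe) hz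
    have h1 : ∑ i ∈ A, y i ≤ ghat A := hyle A (Finset.subset_univ A)
    have h2 : ghat A = val A := hghatF _ ((hmemF _).mpr hAtop)
    have h3 : z = val A := by
      have := hval _ hAtop
      rw [hz] at this
      exact_mod_cast this
    have : ∑ i ∈ A, y i ≤ z := by omega
    calc ∑ i ∈ A, (y i : ℝ) = ((∑ i ∈ A, y i : ℤ) : ℝ) := by push_cast; ring
    _ ≤ (z : ℝ) := by exact_mod_cast this
  · intro j
    have h1 : ρ j ≤ ∑ i ∈ X j, y i := (hghatX j).trans (hytightX j).ge
    calc (ρ j : ℝ) ≤ ((∑ i ∈ X j, y i : ℤ) : ℝ) := by exact_mod_cast h1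
    _ = ∑ i ∈ X j, (y i : ℝ) := by push_cast; ring

end Aux
-- 1-D Euler lemma
open scoped Classical in
theorem euler_line (n : ℕ) (b : Fin n → ℤ) (I : Fin n → Set ℝ)
    (hconv : ∀ m, Convex ℝ (I m)) (hcomp : ∀ m, IsCompact (I m))
    (h : ∀ t : ℝ, ∑ m, b m * (I m).indicator (fun _ => (1:ℤ)) t = 0) :
    ∑ m, b m * (if (I m).Nonempty then 1 else 0) = 0 := by
  classical
  set B : Finset ℝ :=
    ((Finset.univ.filter (fun m => (I m).Nonempty)).image (fun m => sSup (I m))) ∪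
    ((Finset.univ.filter (fun m => (I m).Nonempty)).image (fun m => sInf (I m))) with hB
  have hsupB : ∀ m, (I m).Nonempty → sSup (I m) ∈ B := by
    intro m hm
    exact Finset.mem_union_left _ (Finset.mem_image_of_mem _ (Finset.mem_filter.mpr ⟨Finset.mem_univ _, hm⟩))
  have hinfB : ∀ m, (I m).Nonempty → sInf (I m) ∈ B := by
    intro m hm
    exact Finset.mem_union_right _ (Finset.mem_image_of_mem _ (Finset.mem_filter.mpr ⟨Finset.mem_univ _, hm⟩))
  -- gap δ
  set G : Finset ℝ := ((B ×ˢ B).filter (fun p => p.1 < p.2)).image (fun p => p.2 - p.1) with hG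
  set δ : ℝ := if hG2 : G.Nonempty then G.min' hG2 / 2 else 1 with hδ
  have hGpos : ∀ x ∈ G, 0 < x := by
    intro x hx
    rw [hG] at hx
    obtain ⟨p, hp, rfl⟩ := Finset.mem_image.mp hx
    have := (Finset.mem_filter.mp hp).2
    linarith
  have hδpos : 0 < δ := by
    rw [hδ]
    split_ifs with h2
    · have := hGpos _ (Finset.min'_mem G h2)
      linarith
    · norm_num
  have hδgap : ∀ s ∈ B, ∀ t ∈ B, s < t → δ < t - s := by
    intro s hs t ht hst
    have hmem : t - s ∈ G := by
      rw [hG]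
      exact Finset.mem_image.mpr ⟨(s, t), Finset.mem_filter.mpr ⟨Finset.mem_product.mpr ⟨hs, ht⟩, hst⟩, rfl⟩
    have h2 : G.Nonempty := ⟨_, hmem⟩
    have h3 : G.min' h2 ≤ t - s := Finset.min'_le _ _ hmem
    have h4 := hGpos _ (Finset.min'_mem G h2)
    rw [hδ, dif_pos h2]
    linarith
  -- intervals
  have hIcc : ∀ m, (I m).Nonempty → I m = Set.Icc (sInf (I m)) (sSup (I m)) := by
    intro m hm
    apply le_antisymm
    · intro x hx
      exact Set.mem_Icc.mpr ⟨csInf_le (hcomp m).isBounded.bddBelow hx,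
        le_csSup (hcomp m).isBounded.bddAbove hx⟩
    · have h1 : sInf (I m) ∈ I m := (hcomp m).isClosed.csInf_mem hm (hcomp m).isBounded.bddBelow
      have h2 : sSup (I m) ∈ I m := (hcomp m).isClosed.csSup_mem hm (hcomp m).isBounded.bddAbove
      exact (hconv m).ordConnected.out h1 h2
  -- main computation
  have key : ∀ m, ∑ t ∈ B, ((I m).indicator (fun _ => (1:ℤ)) t - (I m).indicator (fun _ => (1:ℤ)) (t + δ))
      = (if (I m).Nonempty then 1 else 0) := by
    intro m
    by_cases hm : (I m).Nonempty
    · rw [if_pos hm]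
      set α := sInf (I m)
      set β := sSup (I m)
      have hI := hIcc m hm
      have hαB := hinfB m hm
      have hβB := hsupB m hm
      have hαβ : α ≤ β := by
        have h1 : α ∈ I m := (hcomp m).isClosed.csInf_mem hm (hcomp m).isBounded.bddBelow
        rw [hI] at h1
        exact (Set.mem_Icc.mp h1).2
      have step : ∀ t ∈ B, (I m).indicator (fun _ => (1:ℤ)) t - (I m).indicator (fun _ => (1:ℤ)) (t + δ)
          = if t = β then 1 else 0 := by
        intro t htB
        have hmem1 : (I m).indicator (fun _ => (1:ℤ)) t = if (α ≤ t ∧ t ≤ β) then 1 else 0 := by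
          rw [hI]
          simp [Set.indicator_apply, Set.mem_Icc]
          rfl
        have hmem2 : (I m).indicator (fun _ => (1:ℤ)) (t + δ) = if (α ≤ t ∧ t < β) then 1 else 0 := by
          rw [hI]
          simp only [Set.indicator_apply, Set.mem_Icc]
          congr 1
          apply propext
          constructor
          · rintro ⟨h1, h2⟩
            constructor
            · by_contra h3
              push_neg at h3
              have := hδgap t htB α hαB h3
              linarith
            · linarith
          · rintro ⟨h1, h2⟩
            have := hδgap t htB β hβB h2
            constructor <;> linarith
        rw [hmem1, hmem2]
        by_cases h1 : t = β
        · subst h1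
          rw [if_pos ⟨hαβ, le_refl β⟩, if_neg (fun hc => lt_irrefl β hc.2), if_pos rfl]
          ring
        · rw [if_neg h1]
          by_cases h2 : α ≤ t ∧ t ≤ β
          · have h3 : t < β := lt_of_le_of_ne h2.2 h1
            rw [if_pos h2, if_pos ⟨h2.1, h3⟩]
            ring
          · have h4 : ¬ (α ≤ t ∧ t < β) := fun hc => h2 ⟨hc.1, le_of_lt hc.2⟩
            rw [if_neg h2, if_neg h4]
            ring
      rw [Finset.sum_congr rfl step]
      rw [Finset.sum_ite_eq' B β (fun _ => (1:ℤ))]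
      rw [if_pos hβB]
    · rw [if_neg hm]
      have : ∀ t, (I m).indicator (fun _ => (1:ℤ)) t = 0 := by
        intro t
        rw [Set.not_nonempty_iff_eq_empty.mp hm]
        simp
      simp [this]
  have lhs0 : ∑ t ∈ B, (∑ m, b m * (I m).indicator (fun _ => (1:ℤ)) t
      - ∑ m, b m * (I m).indicator (fun _ => (1:ℤ)) (t + δ)) = 0 := by
    apply Finset.sum_eq_zero
    intro t _
    rw [h t, h (t + δ)]
    ring
  calc ∑ m, b m * (if (I m).Nonempty then 1 else 0)
      = ∑ m, b m * ∑ t ∈ B, ((I m).indicator (fun _ => (1:ℤ)) t - (I m).indicator (fun _ => (1:ℤ)) (t + δ)) := by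
        apply Finset.sum_congr rfl
        intro m _
        rw [key m]
    _ = ∑ t ∈ B, (∑ m, b m * (I m).indicator (fun _ => (1:ℤ)) t
        - ∑ m, b m * (I m).indicator (fun _ => (1:ℤ)) (t + δ)) := by
        simp only [Finset.mul_sum]
        rw [Finset.sum_comm]
        apply Finset.sum_congr rfl
        intro t _
        rw [← Finset.sum_sub_distrib]
        apply Finset.sum_congr rfl
        intro m _
        ring
    _ = 0 := lhs0

open scoped Classical in
theorem eulerD : ∀ (d n : ℕ) (b : Fin n → ℤ) (K : Fin n → Set (Fin d → ℝ)),
    (∀ m, Convex ℝ (K m)) → (∀ m, IsCompact (K m)) →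
    (∀ x : Fin d → ℝ, ∑ m, b m * (K m).indicator (fun _ => (1:ℤ)) x = 0) →
    ∑ m, b m * (if (K m).Nonempty then 1 else 0) = 0 := by
  intro d
  induction d with
  | zero =>
    intro n b K hconv hcomp h
    calc ∑ m, b m * (if (K m).Nonempty then 1 else 0)
        = ∑ m, b m * (K m).indicator (fun _ => (1:ℤ)) (fun i => i.elim0) := by
          apply Finset.sum_congr rfl
          intro m _
          congr 1
          by_cases hm : (K m).Nonempty
          · rw [if_pos hm]
            obtain ⟨x, hx⟩ := hm
            have hxe : x = (fun i => i.elim0) := funext (fun i => i.elim0)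
            rw [Set.indicator_of_mem (hxe ▸ hx)]
          · rw [if_neg hm, Set.indicator_of_notMem (fun hc => hm ⟨_, hc⟩)]
      _ = 0 := h _
  | succ d ih =>
    intro n b K hconv hcomp h
    set sn : (Fin d → ℝ) → ℝ → (Fin (d+1) → ℝ) := fun z τ => Fin.snoc z τ with hsn
    set sl : Set (Fin (d+1) → ℝ) → ℝ → Set (Fin d → ℝ) :=
      fun S τ => {z | sn z τ ∈ S} with hsl
    have hsnoc_cont : ∀ τ : ℝ, Continuous (fun z : Fin d → ℝ => sn z τ) := by
      intro τ
      apply continuous_pi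
      intro i
      refine Fin.lastCases ?_ ?_ i
      · have he : (fun z : Fin d → ℝ => sn z τ (Fin.last d)) = fun _ => τ := by
          funext z; simp [hsn]
        rw [he]; exact continuous_const
      · intro j
        have he : (fun z : Fin d → ℝ => sn z τ (Fin.castSucc j)) = fun z => z j := by
          funext z; simp [hsn]
        rw [he]; exact continuous_apply j
    have hsnoc_comb : ∀ (a bb : ℝ) (z w : Fin d → ℝ) (τ : ℝ), a + bb = 1 →
        a • sn z τ + bb • sn w τ = sn (a • z + bb • w) τ := by
      intro a bb z w τ hab
      funext i
      refine Fin.lastCases ?_ ?_ i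
      · simp only [Pi.add_apply, Pi.smul_apply, hsn, Fin.snoc_last, smul_eq_mul]
        rw [← add_mul, hab, one_mul]
      · intro j
        simp only [Pi.add_apply, Pi.smul_apply, hsn, Fin.snoc_castSucc, smul_eq_mul]
    have hconv' : ∀ m τ, Convex ℝ (sl (K m) τ) := by
      intro m τ x hx y hy a bb ha hb hab
      show sn (a • x + bb • y) τ ∈ K m
      rw [← hsnoc_comb a bb x y τ hab]
      exact hconv m hx hy ha hb hab
    have hcomp' : ∀ m τ, IsCompact (sl (K m) τ) := by
      intro m τ
      have hcl : IsClosed (sl (K m) τ) := (hcomp m).isClosed.preimage (hsnoc_cont τ)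
      obtain ⟨C, hC⟩ := (Metric.isBounded_iff_subset_closedBall 0).mp (hcomp m).isBounded
      have hbd : Bornology.IsBounded (sl (K m) τ) := by
        apply Bornology.IsBounded.subset (Metric.isBounded_closedBall (x := (0 : Fin d → ℝ)) (r := max C 0))
        intro z hz
        have h1 : sn z τ ∈ Metric.closedBall (0 : Fin (d+1) → ℝ) C := hC hz
        rw [Metric.mem_closedBall, dist_zero_right] at h1 ⊢
        have h2 : ‖z‖ ≤ ‖sn z τ‖ := by
          apply (pi_norm_le_iff_of_nonneg (norm_nonneg _)).mpr
          intro i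
          have he : z i = sn z τ (Fin.castSucc i) := by simp [hsn]
          rw [he]
          exact norm_le_pi_norm _ _
        calc ‖z‖ ≤ ‖sn z τ‖ := h2
        _ ≤ C := h1
        _ ≤ max C 0 := le_max_left _ _
      exact Metric.isCompact_of_isClosed_isBounded hcl hbd
    have hind : ∀ (m : Fin n) (z : Fin d → ℝ) (τ : ℝ),
        (sl (K m) τ).indicator (fun _ => (1:ℤ)) z = (K m).indicator (fun _ => (1:ℤ)) (sn z τ) := by
      intro m z τ
      by_cases hz : sn z τ ∈ K m
      · rw [Set.indicator_of_mem hz, Set.indicator_of_mem (show z ∈ sl (K m) τ from hz)]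
      · rw [Set.indicator_of_notMem hz, Set.indicator_of_notMem (show z ∉ sl (K m) τ from hz)]
    have hτ : ∀ τ : ℝ, ∑ m, b m * (if (sl (K m) τ).Nonempty then 1 else 0) = 0 := by
      intro τ
      apply ih n b (fun m => sl (K m) τ) (fun m => hconv' m τ) (fun m => hcomp' m τ)
      intro z
      rw [← h (sn z τ)]
      apply Finset.sum_congr rfl
      intro m _
      rw [hind m z τ]
    set I : Fin n → Set ℝ := fun m => (fun x : Fin (d+1) → ℝ => x (Fin.last d)) '' (K m) with hI
    have hIN : ∀ m τ, ((sl (K m) τ).Nonempty ↔ τ ∈ I m) := by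
      intro m τ
      constructor
      · rintro ⟨z, hz⟩
        exact ⟨sn z τ, hz, by simp [hsn]⟩
      · rintro ⟨x, hxK, hxτ⟩
        refine ⟨Fin.init x, ?_⟩
        show sn (Fin.init x) τ ∈ K m
        rw [hsn]
        show Fin.snoc (Fin.init x) τ ∈ K m
        rw [← hxτ]
        rw [Fin.snoc_init_self]
        exact hxK
    have hIconv : ∀ m, Convex ℝ (I m) := by
      intro m
      exact (hconv m).linear_image (LinearMap.proj (Fin.last d))
    have hIcomp : ∀ m, IsCompact (I m) := by
      intro m
      exact (hcomp m).image (continuous_apply (Fin.last d))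
    have hIh : ∀ t : ℝ, ∑ m, b m * (I m).indicator (fun _ => (1:ℤ)) t = 0 := by
      intro t
      rw [← hτ t]
      apply Finset.sum_congr rfl
      intro m _
      congr 1
      by_cases hm : t ∈ I m
      · rw [Set.indicator_of_mem hm, if_pos ((hIN m t).mpr hm)]
      · rw [Set.indicator_of_notMem hm, if_neg (fun hc => hm ((hIN m t).mp hc))]
    have hfin := euler_line n b I hIconv hIcomp hIh
    calc ∑ m, b m * (if (K m).Nonempty then 1 else 0)
        = ∑ m, b m * (if (I m).Nonempty then 1 else 0) := by
          apply Finset.sum_congr rfl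
          intro m _
          congr 1
          exact (if_congr (Iff.symm Set.image_nonempty) rfl rfl)
      _ = 0 := hfin

open scoped Classical in
theorem euler_closed (d n : ℕ) (b : Fin n → ℤ) (K : Fin n → Set (Fin d → ℝ))
    (hconv : ∀ m, Convex ℝ (K m)) (hcl : ∀ m, IsClosed (K m))
    (h : ∀ x : Fin d → ℝ, ∑ m, b m * (K m).indicator (fun _ => (1:ℤ)) x = 0) :
    ∑ m, b m * (if (K m).Nonempty then 1 else 0) = 0 := by
  have hpts : ∀ m : Fin n, ∃ p : Fin d → ℝ, (K m).Nonempty → p ∈ K m := by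
    intro m
    by_cases hm : (K m).Nonempty
    · exact ⟨hm.choose, fun _ => hm.choose_spec⟩
    · exact ⟨0, fun hc => absurd hc hm⟩
  choose p hp using hpts
  set R : ℝ := ∑ m, ‖p m‖ with hR
  have hpR : ∀ m, ‖p m‖ ≤ R := by
    intro m
    rw [hR]
    exact Finset.single_le_sum (f := fun m => ‖p m‖) (fun i _ => norm_nonneg _) (Finset.mem_univ m)
  set C : Set (Fin d → ℝ) := Metric.closedBall 0 R with hC
  set K' : Fin n → Set (Fin d → ℝ) := fun m => K m ∩ C with hK'
  have hconv' : ∀ m, Convex ℝ (K' m) := fun m => (hconv m).inter (convex_closedBall 0 R)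
  have hcomp' : ∀ m, IsCompact (K' m) := by
    intro m
    exact (isCompact_closedBall (0 : Fin d → ℝ) R).inter_left (hcl m)
  have hzero' : ∀ x : Fin d → ℝ, ∑ m, b m * (K' m).indicator (fun _ => (1:ℤ)) x = 0 := by
    intro x
    by_cases hx : x ∈ C
    · rw [← h x]
      apply Finset.sum_congr rfl
      intro m _
      congr 1
      by_cases hxm : x ∈ K m
      · rw [Set.indicator_of_mem hxm, Set.indicator_of_mem (Set.mem_inter hxm hx)]
      · rw [Set.indicator_of_notMem hxm, Set.indicator_of_notMem (fun hc => hxm hc.1)]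
    · apply Finset.sum_eq_zero
      intro m _
      rw [Set.indicator_of_notMem (fun hc => hx hc.2), mul_zero]
  have hne : ∀ m, (K' m).Nonempty ↔ (K m).Nonempty := by
    intro m
    constructor
    · rintro ⟨x, hx, _⟩; exact ⟨x, hx⟩
    · intro hm
      refine ⟨p m, hp m hm, ?_⟩
      rw [hC, Metric.mem_closedBall, dist_zero_right]
      exact hpR m
  have hthis := eulerD d n b K' hconv' hcomp' hzero'
  calc ∑ m, b m * (if (K m).Nonempty then 1 else 0)
      = ∑ m, b m * (if (K' m).Nonempty then 1 else 0) := by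
        apply Finset.sum_congr rfl
        intro m _
        congr 1
        exact (if_congr (Iff.symm (hne m)) rfl rfl)
    _ = 0 := hthis

/-- The function `s_{X̲,r̲}` is valuative: if `∑ m, a_m [Q(rk_m)] = 0` for megamatroids
of common rank `r`, then `∑ m, a_m s_{X̲,r̲}(rk_m) = 0`, for every chain
`∅ ⊂ X_1 ⊂ ⋯ ⊂ X_{k+1} = {1,…,d}` and integer vector `r̲` with last entry `r`. -/
theorem s_valuative (d : ℕ) (r : ℤ) (n : ℕ) (M : Fin n → Megamatroid d)
    (hrank : ∀ m, (M m).rk Finset.univ = (r : WithTop ℤ))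
    (a : Fin n → ℤ)
    (hzero : (∑ m, a m • indFn (megaQ (M m))) = 0)
    (k : ℕ) (X : Fin (k + 1) → Finset (Fin d)) (rv : Fin (k + 1) → ℤ)
    (hX : StrictMono X) (hX0 : X 0 ≠ ∅) (hXlast : X (Fin.last k) = Finset.univ)
    (hrv : rv (Fin.last k) = r) :
    (∑ m, a m *
        (if ∀ j : Fin (k + 1), (M m).rk (X j) = (rv j : WithTop ℤ) then 1 else 0)) = 0 := by
  classical
  -- pointwise form of the hypothesis
  have hpt : ∀ y : Fin d → ℝ,
      ∑ m, a m * (megaQ (M m)).indicator (fun _ => (1:ℤ)) y = 0 := by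
    intro y
    have h0 := congrFun hzero y
    simp only [Finset.sum_apply, Pi.smul_apply, smul_eq_mul, Pi.zero_apply, indFn] at h0
    exact h0
  -- the sets K ρ m = Q(rk_m) ∩ {y | ∑_{X j} y ≥ ρ j}
  set H : (Fin (k+1) → ℤ) → Set (Fin d → ℝ) :=
    fun ρ => {y | ∀ j, (ρ j : ℝ) ≤ ∑ i ∈ X j, y i} with hH
  set K : (Fin (k+1) → ℤ) → Fin n → Set (Fin d → ℝ) :=
    fun ρ m => megaQ (M m) ∩ H ρ with hKdef
  have hsum_lin : ∀ (A : Finset (Fin d)) (α β : ℝ) (y z : Fin d → ℝ),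
      ∑ i ∈ A, (α • y + β • z) i = α * ∑ i ∈ A, y i + β * ∑ i ∈ A, z i := by
    intro A α β y z
    simp only [Pi.add_apply, Pi.smul_apply, smul_eq_mul]
    rw [Finset.sum_add_distrib, Finset.mul_sum, Finset.mul_sum]
  have hKconv : ∀ ρ m, Convex ℝ (K ρ m) := by
    intro ρ m
    apply Convex.inter
    · intro y hy z hz α β hα hβ hαβ
      constructor
      · intro w hw
        rw [hsum_lin Finset.univ α β y z, hy.1 w hw, hz.1 w hw, ← add_mul, hαβ, one_mul]
      · intro A w hw
        rw [hsum_lin A α β y z]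
        have h2 := hy.2 A w hw
        have h3 := hz.2 A w hw
        calc α * ∑ i ∈ A, y i + β * ∑ i ∈ A, z i
            ≤ α * (w : ℝ) + β * (w : ℝ) :=
              add_le_add (mul_le_mul_of_nonneg_left h2 hα) (mul_le_mul_of_nonneg_left h3 hβ)
        _ = (w : ℝ) := by rw [← add_mul, hαβ, one_mul]
    · intro y hy z hz α β hα hβ hαβ j
      show (ρ j : ℝ) ≤ ∑ i ∈ X j, (α • y + β • z) i
      rw [hsum_lin (X j) α β y z]
      have h2 := hy j
      have h3 := hz j
      calc (ρ j : ℝ) = (α + β) * (ρ j : ℝ) := by rw [hαβ, one_mul]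
      _ = α * (ρ j : ℝ) + β * (ρ j : ℝ) := add_mul _ _ _
      _ ≤ α * ∑ i ∈ X j, y i + β * ∑ i ∈ X j, z i :=
          add_le_add (mul_le_mul_of_nonneg_left h2 hα) (mul_le_mul_of_nonneg_left h3 hβ)
  have hKcl : ∀ ρ m, IsClosed (K ρ m) := by
    intro ρ m
    apply IsClosed.inter
    · have hdecomp : megaQ (M m) =
          {y : Fin d → ℝ | ∀ z : ℤ, (M m).rk Finset.univ = (z : WithTop ℤ) → ∑ i, y i = (z : ℝ)} ∩
          {y : Fin d → ℝ | ∀ A : Finset (Fin d), ∀ z : ℤ,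
            (M m).rk A = (z : WithTop ℤ) → ∑ i ∈ A, y i ≤ (z : ℝ)} := by
        ext y; exact Iff.rfl
      rw [hdecomp]
      apply IsClosed.inter
      · have he : {y : Fin d → ℝ | ∀ z : ℤ, (M m).rk Finset.univ = (z : WithTop ℤ) →
            ∑ i, y i = (z : ℝ)} =
            ⋂ (z : ℤ), ⋂ (_ : (M m).rk Finset.univ = (z : WithTop ℤ)),
              {y : Fin d → ℝ | ∑ i, y i = (z : ℝ)} := by
          ext y; simp [Set.mem_iInter]
        rw [he]
        exact isClosed_iInter fun z => isClosed_iInter fun _ =>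
          isClosed_eq (continuous_finset_sum _ fun i _ => continuous_apply i) continuous_const
      · have he : {y : Fin d → ℝ | ∀ A : Finset (Fin d), ∀ z : ℤ,
            (M m).rk A = (z : WithTop ℤ) → ∑ i ∈ A, y i ≤ (z : ℝ)} =
            ⋂ (A : Finset (Fin d)), ⋂ (z : ℤ), ⋂ (_ : (M m).rk A = (z : WithTop ℤ)),
              {y : Fin d → ℝ | ∑ i ∈ A, y i ≤ (z : ℝ)} := by
          ext y; simp [Set.mem_iInter]
        rw [he]
        exact isClosed_iInter fun A => isClosed_iInter fun z => isClosed_iInter fun _ =>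
          isClosed_le (continuous_finset_sum _ fun i _ => continuous_apply i) continuous_const
    · have he : H ρ = ⋂ (j : Fin (k+1)), {y : Fin d → ℝ | (ρ j : ℝ) ≤ ∑ i ∈ X j, y i} := by
        ext y; simp [hH, Set.mem_iInter]
      rw [he]
      exact isClosed_iInter fun j =>
        isClosed_le continuous_const (continuous_finset_sum _ fun i _ => continuous_apply i)
  have hKzero : ∀ ρ (y : Fin d → ℝ),
      ∑ m, a m * (K ρ m).indicator (fun _ => (1:ℤ)) y = 0 := by
    intro ρ y
    by_cases hy : y ∈ H ρ
    · rw [← hpt y]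
      apply Finset.sum_congr rfl
      intro m _
      congr 1
      by_cases hym : y ∈ megaQ (M m)
      · rw [Set.indicator_of_mem (Set.mem_inter hym hy), Set.indicator_of_mem hym]
      · rw [Set.indicator_of_notMem (fun hc => hym hc.1), Set.indicator_of_notMem hym]
    · apply Finset.sum_eq_zero
      intro m _
      rw [Set.indicator_of_notMem (fun hc => hy hc.2), mul_zero]
  have hKne : ∀ ρ m, (K ρ m).Nonempty ↔ ∀ j, ((ρ j : ℤ) : WithTop ℤ) ≤ (M m).rk (X j) := by
    intro ρ m
    constructor
    · rintro ⟨y, hyQ, hyH⟩ j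
      by_cases htop : (M m).rk (X j) = ⊤
      · rw [htop]; exact le_top
      · obtain ⟨w, hw⟩ := WithTop.ne_top_iff_exists.mp htop
        rw [← hw, WithTop.coe_le_coe]
        have h1 : ∑ i ∈ X j, y i ≤ (w : ℝ) := hyQ.2 (X j) w hw.symm
        have h2 : (ρ j : ℝ) ≤ ∑ i ∈ X j, y i := hyH j
        exact_mod_cast h2.trans h1
    · intro hall
      obtain ⟨y, hyQ, hyH⟩ := mega_exists_point d k (M m) X hX.monotone hXlast ρ hall
      exact ⟨y, hyQ, hyH⟩
  have hNE : ∀ ρ : Fin (k+1) → ℤ,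
      ∑ m, a m * (if (∀ j, ((ρ j : ℤ) : WithTop ℤ) ≤ (M m).rk (X j)) then (1:ℤ) else 0) = 0 := by
    intro ρ
    have h0 := euler_closed d n a (K ρ) (hKconv ρ) (hKcl ρ) (hKzero ρ)
    calc ∑ m, a m * (if (∀ j, ((ρ j : ℤ) : WithTop ℤ) ≤ (M m).rk (X j)) then (1:ℤ) else 0)
        = ∑ m, a m * (if (K ρ m).Nonempty then 1 else 0) := by
          apply Finset.sum_congr rfl
          intro m _
          congr 1
          exact if_congr (Iff.symm (hKne ρ m)) rfl rfl
      _ = 0 := h0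
  -- inclusion–exclusion
  set u : Fin n → Fin (k+1) → ℤ :=
    fun m j => if ((rv j : ℤ) : WithTop ℤ) ≤ (M m).rk (X j) then 1 else 0 with hu
  set v : Fin n → Fin (k+1) → ℤ :=
    fun m j => if (((rv j + 1) : ℤ) : WithTop ℤ) ≤ (M m).rk (X j) then 1 else 0 with hv
  have huv : ∀ m j, u m j - v m j
      = if (M m).rk (X j) = (rv j : WithTop ℤ) then 1 else 0 := by
    intro m j
    by_cases htop : (M m).rk (X j) = ⊤
    · simp only [hu, hv, htop]
      rw [if_pos le_top, if_pos le_top, if_neg (by exact fun h => WithTop.top_ne_coe h)]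
      ring
    · obtain ⟨w, hw⟩ := WithTop.ne_top_iff_exists.mp htop
      simp only [hu, hv, ← hw, WithTop.coe_le_coe, WithTop.coe_inj]
      split_ifs <;> omega
  have hprod : ∀ m, (if ∀ j : Fin (k+1), (M m).rk (X j) = (rv j : WithTop ℤ) then (1:ℤ) else 0)
      = ∏ j, (u m j - v m j) := by
    intro m
    have h1 : ∏ j, (u m j - v m j)
        = ∏ j, (if (M m).rk (X j) = (rv j : WithTop ℤ) then (1:ℤ) else 0) :=
      Finset.prod_congr rfl (fun j _ => huv m j)
    rw [h1, Finset.prod_boole]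
    by_cases hall : ∀ j : Fin (k+1), (M m).rk (X j) = (rv j : WithTop ℤ)
    · rw [if_pos hall, if_pos (fun j _ => hall j)]
    · rw [if_neg hall, if_neg (fun hc => hall (fun j => hc j (Finset.mem_univ j)))]
  calc ∑ m, a m * (if ∀ j : Fin (k + 1), (M m).rk (X j) = (rv j : WithTop ℤ) then (1:ℤ) else 0)
      = ∑ m, a m * ∏ j, (u m j - v m j) :=
        Finset.sum_congr rfl (fun m _ => by rw [hprod m])
    _ = ∑ m, a m * ∑ t ∈ (Finset.univ : Finset (Fin (k+1))).powerset,
          (∏ j ∈ t, -(v m j)) * ∏ j ∈ Finset.univ \ t, u m j := by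
        apply Finset.sum_congr rfl
        intro m _
        congr 1
        have hrw : ∀ j ∈ (Finset.univ : Finset (Fin (k+1))), u m j - v m j = -(v m j) + u m j :=
          fun j _ => by ring
        rw [Finset.prod_congr rfl hrw, Finset.prod_add]
    _ = ∑ t ∈ (Finset.univ : Finset (Fin (k+1))).powerset,
          ∑ m, a m * ((∏ j ∈ t, -(v m j)) * ∏ j ∈ Finset.univ \ t, u m j) := by
        simp only [Finset.mul_sum]
        rw [Finset.sum_comm]
    _ = ∑ t ∈ (Finset.univ : Finset (Fin (k+1))).powerset,
          (-1 : ℤ)^t.card * ∑ m, a m * ∏ j, (if j ∈ t then v m j else u m j) := by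
        apply Finset.sum_congr rfl
        intro t _
        have hsplit : ∀ m, (∏ j ∈ t, -(v m j)) * ∏ j ∈ Finset.univ \ t, u m j
            = (-1:ℤ)^t.card * ∏ j, (if j ∈ t then v m j else u m j) := by
          intro m
          have h2 : ∏ j, (if j ∈ t then v m j else u m j)
              = (∏ j ∈ t, v m j) * ∏ j ∈ Finset.univ \ t, u m j := by
            rw [Finset.prod_ite]
            congr 1
            · apply Finset.prod_congr ?_ (fun _ _ => rfl)
              ext j; simp
            · apply Finset.prod_congr ?_ (fun _ _ => rfl)
              ext j; simp
          have h3 : ∏ j ∈ t, -(v m j) = (-1:ℤ)^t.card * ∏ j ∈ t, v m j := by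
            calc ∏ j ∈ t, -(v m j) = ∏ j ∈ t, ((-1) * v m j) := by
                  apply Finset.prod_congr rfl; intro j _; ring
            _ = (∏ _j ∈ t, (-1:ℤ)) * ∏ j ∈ t, v m j := Finset.prod_mul_distrib
            _ = (-1:ℤ)^t.card * ∏ j ∈ t, v m j := by rw [Finset.prod_const]
          rw [h2, h3, mul_assoc]
        rw [Finset.sum_congr rfl (fun m _ => by rw [hsplit m]), Finset.mul_sum]
        apply Finset.sum_congr rfl
        intro m _
        ring
    _ = ∑ t ∈ (Finset.univ : Finset (Fin (k+1))).powerset, (-1 : ℤ)^t.card * 0 := by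
        apply Finset.sum_congr rfl
        intro t _
        congr 1
        have hρ : ∀ m, ∏ j, (if j ∈ t then v m j else u m j)
            = if (∀ j, (((if j ∈ t then rv j + 1 else rv j) : ℤ) : WithTop ℤ) ≤ (M m).rk (X j))
              then (1:ℤ) else 0 := by
          intro m
          have hterm : ∀ j ∈ (Finset.univ : Finset (Fin (k+1))), (if j ∈ t then v m j else u m j)
              = if (((if j ∈ t then rv j + 1 else rv j) : ℤ) : WithTop ℤ) ≤ (M m).rk (X j)
                then (1:ℤ) else 0 := by
            intro j _
            by_cases hj : j ∈ t <;> simp only [hj, hu, hv, ↓reduceIte]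
          rw [Finset.prod_congr rfl hterm, Finset.prod_boole]
          by_cases hall : ∀ j : Fin (k+1),
              (((if j ∈ t then rv j + 1 else rv j) : ℤ) : WithTop ℤ) ≤ (M m).rk (X j)
          · rw [if_pos (fun j _ => hall j), if_pos hall]
          · rw [if_neg (fun hc => hall (fun j => hc j (Finset.mem_univ j))), if_neg hall]
        rw [Finset.sum_congr rfl (fun m _ => by rw [hρ m])]
        exact hNE (fun j => if j ∈ t then rv j + 1 else rv j)
    _ = 0 := by simp
end
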